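/- arXiv:1006.1133 — 7 statements merged into one kernel-verified Lean document; each statement's English description precedes it below -/
import Mathlib

section
/- Let Ω ⊆ ℝ⁴ be open, let φ : Ω → ℝ³ be smooth, and set σ₃(x) = det( Dφ(x) · η♯ · Dφ(x)ᵀ ), where Dφ(x) is the 3×4 Jacobian matrix of φ at x and η♯ = diag(1,1,1,−1). Assume σ₃(x) > 0 on Ω, and let U : Ω → ℝ⁴ be a smooth vector field with η(U(x),U(x)) = −1 and Dφ(x)·U(x) = 0 for all x ∈ Ω. Then the identity Σ_μ ∂_μ U^μ + Σ_μ U^μ ∂_μ ( ln √(σ₃) ) = 0 holds on Ω. -/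
open scoped BigOperators

noncomputable section

/-- Coefficients of the Minkowski metric `diag(1,1,1,−1)`
(the fourth coordinate, index `3`, is timelike). -/
def etaCoef : Fin 4 → ℝ := fun μ => if μ = 3 then -1 else 1

/-- The Minkowski bilinear form on `ℝ⁴`: `η(v,w) = v₁w₁ + v₂w₂ + v₃w₃ − v₄w₄`. -/
def eta (v w : Fin 4 → ℝ) : ℝ := ∑ μ, etaCoef μ * v μ * w μ

/-- The components `η_{μν} = diag(1,1,1,−1)` of the Minkowski metric. -/
def etaMat (μ ν : Fin 4) : ℝ := if μ = ν then etaCoef μ else 0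

/-- The partial derivative `∂_μ f (x)`. -/
def pd (μ : Fin 4) (f : (Fin 4 → ℝ) → ℝ) (x : Fin 4 → ℝ) : ℝ :=
  fderiv ℝ f x (Pi.single μ 1)

/-- The Minkowski gradient `grad p = (∂₁p, ∂₂p, ∂₃p, −∂₄p)`. -/
def mgrad (p : (Fin 4 → ℝ) → ℝ) (x : Fin 4 → ℝ) : Fin 4 → ℝ :=
  fun ν => etaCoef ν * pd ν p x

/-- The relativistic Euler equations for the triple `(U, ρ, p)` on `Ω`:
`(ρ+p)·Σ_μ U^μ ∂_μ U^ν + (grad p)^ν + η(grad p, U)·U^ν = 0`. -/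
def EulerEqs (Ω : Set (Fin 4 → ℝ)) (U : (Fin 4 → ℝ) → Fin 4 → ℝ)
    (ρ p : (Fin 4 → ℝ) → ℝ) : Prop :=
  ∀ x ∈ Ω, ∀ ν : Fin 4,
    (ρ x + p x) * (∑ μ, U x μ * pd μ (fun y => U y ν) x)
      + mgrad p x ν + eta (mgrad p x) (U x) * U x ν = 0

/-- Conservation of energy along flow lines:
`(ρ+p)·Σ_μ ∂_μ U^μ + Σ_μ U^μ ∂_μ ρ = 0` on `Ω`. -/
def EnergyCons (Ω : Set (Fin 4 → ℝ)) (U : (Fin 4 → ℝ) → Fin 4 → ℝ)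
    (ρ p : (Fin 4 → ℝ) → ℝ) : Prop :=
  ∀ x ∈ Ω,
    (ρ x + p x) * (∑ μ, pd μ (fun y => U y μ) x) + (∑ μ, U x μ * pd μ ρ x) = 0

/-- `σ₃(x) = det( Dφ(x) · η♯ · Dφ(x)ᵀ )`. -/
def sigma3 (φ : (Fin 4 → ℝ) → Fin 3 → ℝ) (x : Fin 4 → ℝ) : ℝ :=
  Matrix.det (Matrix.of fun a b : Fin 3 =>
    ∑ μ, pd μ (fun y => φ y a) x * etaCoef μ * pd μ (fun y => φ y b) x)

namespace S6
def ee (μ : Fin 4) : Fin 4 → ℝ := Pi.single μ 1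

lemma etaCoef_sq (μ : Fin 4) : etaCoef μ * etaCoef μ = 1 := by
  unfold etaCoef; split <;> norm_num

def detCM : ContinuousMultilinearMap ℝ (fun _ : Fin 4 => (Fin 4 → ℝ)) ℝ :=
  MultilinearMap.mkContinuous
    (Matrix.detRowAlternating : (Fin 4 → ℝ) [⋀^Fin 4]→ₗ[ℝ] ℝ).toMultilinearMap
    (Fintype.card (Equiv.Perm (Fin 4))) (by
      intro m
      have h1 : (Matrix.detRowAlternating (R := ℝ) (n := Fin 4)).toMultilinearMap m
          = Matrix.det (Matrix.of m) := rfl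
      rw [h1, Matrix.det_apply']
      refine (norm_sum_le _ _).trans ?_
      have hb : ∀ σ ∈ Finset.univ (α := Equiv.Perm (Fin 4)),
          ‖(Equiv.Perm.sign σ : ℝ) * ∏ i, Matrix.of m (σ i) i‖ ≤ ∏ i, ‖m i‖ := by
        intro σ _
        rw [norm_mul]
        have hsgn : ‖((Equiv.Perm.sign σ : ℤ) : ℝ)‖ = 1 := by
          rcases Int.units_eq_one_or (Equiv.Perm.sign σ) with h | h <;> rw [h] <;> norm_num
        rw [hsgn, one_mul]
        calc ‖∏ i, Matrix.of m (σ i) i‖ = ∏ i, |m (σ i) i| := by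
              rw [Real.norm_eq_abs, Finset.abs_prod]; rfl
          _ ≤ ∏ i, ‖m (σ i)‖ :=
              Finset.prod_le_prod (fun i _ => abs_nonneg _)
                  (fun i _ => norm_le_pi_norm (m (σ i)) i)
          _ = ∏ i, ‖m i‖ := Equiv.prod_comp σ (fun i => ‖m i‖)
      refine (Finset.sum_le_card_nsmul _ _ _ hb).trans ?_
      simp [nsmul_eq_mul])

lemma detCM_apply (m : Fin 4 → Fin 4 → ℝ) : detCM m = Matrix.det (Matrix.of m) := rfl

def vvec (g : Fin 3 → Fin 4 → ℝ) (μ : Fin 4) : ℝ :=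
  Matrix.det (Matrix.of (Fin.cons (ee μ) g))

lemma det_cons_eq_sum (g : Fin 3 → Fin 4 → ℝ) (w : Fin 4 → ℝ) :
    Matrix.det (Matrix.of (Fin.cons w g)) = ∑ μ, w μ * vvec g μ := by
  have expand : ∀ w : Fin 4 → ℝ, Matrix.det (Matrix.of (Fin.cons w g)) =
      ∑ j : Fin 4, (-1 : ℝ)^(j:ℕ) * w j *
        Matrix.det (Matrix.of (fun a b : Fin 3 => g a (Fin.succAbove j b))) := by
    intro w
    rw [Matrix.det_succ_row_zero]
    refine Finset.sum_congr rfl fun j _ => ?_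
    have h1 : Matrix.of (Fin.cons w g) 0 j = w j := rfl
    have h2 : (Matrix.of (Fin.cons w g)).submatrix Fin.succ j.succAbove
        = Matrix.of (fun a b : Fin 3 => g a (Fin.succAbove j b)) := by
      ext a b
      simp [Matrix.submatrix_apply, Matrix.of_apply, Fin.cons_succ]
    rw [h1, h2]
  have hv : ∀ μ : Fin 4, vvec g μ =
      (-1 : ℝ)^(μ:ℕ) * Matrix.det (Matrix.of (fun a b : Fin 3 => g a (Fin.succAbove μ b))) := by
    intro μ
    rw [vvec, expand]
    rw [Finset.sum_eq_single μ]
    · simp [ee]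
    · intro j _ hj
      simp [ee, Pi.single_apply, hj]
    · intro h; exact absurd (Finset.mem_univ μ) h
  rw [expand]
  refine Finset.sum_congr rfl fun μ _ => ?_
  rw [hv]; ring

lemma vvec_orth (g : Fin 3 → Fin 4 → ℝ) (a : Fin 3) : ∑ μ, g a μ * vvec g μ = 0 := by
  rw [← det_cons_eq_sum]
  refine Matrix.det_zero_of_row_eq (i := 0) (j := a.succ) (Fin.succ_ne_zero a).symm ?_
  show (Matrix.of (Fin.cons (g a) g)) 0 = (Matrix.of (Fin.cons (g a) g)) a.succ
  show (Fin.cons (g a) g : Fin 4 → Fin 4 → ℝ) 0 = (Fin.cons (g a) g : Fin 4 → Fin 4 → ℝ) a.succ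
  rw [Fin.cons_zero, Fin.cons_succ]

def gram (g : Fin 3 → Fin 4 → ℝ) : Matrix (Fin 3) (Fin 3) ℝ :=
  Matrix.of fun a b => ∑ μ, g a μ * etaCoef μ * g b μ

lemma main_alg (g : Fin 3 → Fin 4 → ℝ) (u : Fin 4 → ℝ)
    (hvert : ∀ a, ∑ μ, g a μ * u μ = 0)
    (hunit : ∑ μ, etaCoef μ * u μ * u μ = -1)
    (hs : 0 < (gram g).det) :
    (∑ μ, etaCoef μ * u μ * vvec g μ)^2 = (gram g).det ∧
    ∀ μ, u μ = -(vvec g μ) / (∑ μ, etaCoef μ * u μ * vvec g μ) := by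
  set c := ∑ μ, etaCoef μ * u μ * vvec g μ with hc
  set P : Matrix (Fin 4) (Fin 4) ℝ :=
    Matrix.of (Fin.cons (fun μ => etaCoef μ * u μ) g) with hP
  set Ed : Matrix (Fin 4) (Fin 4) ℝ := Matrix.diagonal etaCoef with hEd
  set B : Matrix (Fin 4) (Fin 4) ℝ :=
    Matrix.of (Fin.cons (Fin.cons (-1 : ℝ) (fun _ => 0) : Fin 4 → ℝ)
      (fun a : Fin 3 => (Fin.cons 0 (fun b => gram g a b) : Fin 4 → ℝ))) with hBdef
  have hentry : ∀ i j, (P * Ed * P.transpose) i j = ∑ μ, P i μ * etaCoef μ * P j μ := by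
    intro i j
    rw [Matrix.mul_apply]
    refine Finset.sum_congr rfl fun μ _ => ?_
    rw [Matrix.mul_diagonal, Matrix.transpose_apply]
  have hB : P * Ed * P.transpose = B := by
    ext i j
    rw [hentry]
    refine Fin.cases ?_ (fun a => ?_) i <;> refine Fin.cases ?_ (fun b => ?_) j <;>
      simp only [hBdef, hP, Matrix.of_apply, Fin.cons_zero, Fin.cons_succ]
    · rw [← hunit]
      exact Finset.sum_congr rfl fun μ _ =>
        by linear_combination (etaCoef μ * u μ * u μ) * etaCoef_sq μ
    · rw [← hvert b]
      exact Finset.sum_congr rfl fun μ _ =>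
        by linear_combination (g b μ * u μ) * etaCoef_sq μ
    · rw [← hvert a]
      exact Finset.sum_congr rfl fun μ _ =>
        by linear_combination (g a μ * u μ) * etaCoef_sq μ
    · rfl
  have hdetB : (P * Ed * P.transpose).det = -(gram g).det := by
    have hz : ∀ j : Fin 4, j ≠ 0 →
        (-1:ℝ)^(j:ℕ) * B 0 j * ((B.submatrix Fin.succ j.succAbove).det) = 0 := by
      intro j hj
      obtain ⟨k, rfl⟩ := Fin.exists_succ_eq.2 hj
      have hB0 : B 0 k.succ = 0 := by
        show (Fin.cons (-1 : ℝ) (fun _ => 0) : Fin 4 → ℝ) k.succ = 0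
        rw [Fin.cons_succ]
      rw [hB0]; ring
    have hsub : B.submatrix Fin.succ (Fin.succAbove 0) = gram g := by
      ext a b
      show (Fin.cons (0:ℝ) (fun b => gram g a b) : Fin 4 → ℝ) (Fin.succAbove 0 b) = gram g a b
      rw [Fin.succAbove_zero, Fin.cons_succ]
    have h00 : B 0 0 = -1 := rfl
    rw [hB, Matrix.det_succ_row_zero,
      Finset.sum_eq_single_of_mem (0 : Fin 4) (Finset.mem_univ _) (fun j _ hj => hz j hj),
      h00, hsub]
    norm_num
  have hdetEd : Ed.det = -1 := by
    rw [hEd, Matrix.det_diagonal, Fin.prod_univ_four]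
    norm_num [show etaCoef 0 = 1 from rfl, show etaCoef 1 = 1 from rfl,
      show etaCoef 2 = 1 from rfl, show etaCoef 3 = -1 from rfl]
  have hdetP : P.det = c := by
    rw [hP]
    show (Matrix.of (Fin.cons (fun μ => etaCoef μ * u μ) g)).det = c
    rw [det_cons_eq_sum, hc]
  have hc2 : c ^ 2 = (gram g).det := by
    have h2 := hdetB
    rw [Matrix.det_mul, Matrix.det_mul, Matrix.det_transpose, hdetP, hdetEd] at h2
    nlinarith [h2]
  have hcne : c ≠ 0 := by
    intro h
    rw [h] at hc2
    simp only [ne_eq, OfNat.ofNat_ne_zero, not_false_eq_true, zero_pow] at hc2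
    rw [← hc2] at hs
    exact lt_irrefl 0 hs
  refine ⟨hc2, fun μ => ?_⟩
  have hPu : P.mulVec u = (Fin.cons (-1 : ℝ) (fun _ => 0) : Fin 4 → ℝ) := by
    funext i
    rw [Matrix.mulVec, dotProduct]
    refine Fin.cases ?_ (fun a => ?_) i
    · rw [Fin.cons_zero, ← hunit]
      exact Finset.sum_congr rfl fun μ _ => by
        show P 0 μ * u μ = _
        rw [hP]
        show (etaCoef μ * u μ) * u μ = _
        ring
    · rw [Fin.cons_succ, ← hvert a]
      exact Finset.sum_congr rfl fun μ _ => rfl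
  have hPv : P.mulVec (vvec g) = (Fin.cons c (fun _ => 0) : Fin 4 → ℝ) := by
    funext i
    rw [Matrix.mulVec, dotProduct]
    refine Fin.cases ?_ (fun a => ?_) i
    · rw [Fin.cons_zero, hc]
      exact Finset.sum_congr rfl fun μ _ => rfl
    · rw [Fin.cons_succ, ← vvec_orth g a]
      exact Finset.sum_congr rfl fun μ _ => rfl
  have hker : c • u + vvec g = 0 := by
    apply Matrix.eq_zero_of_mulVec_eq_zero (by rw [hdetP]; exact hcne)
    rw [Matrix.mulVec_add, Matrix.mulVec_smul, hPu, hPv]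
    funext i
    refine Fin.cases ?_ (fun a => ?_) i <;>
      simp [Fin.cons_zero, Fin.cons_succ]
  have h' : c * u μ + vvec g μ = 0 := by
    have h'' := congrFun hker μ
    simpa using h''
  field_simp
  linarith

lemma eq_sum_ee (v : Fin 4 → ℝ) : v = ∑ κ, v κ • ee κ := by
  funext ν
  rw [Finset.sum_apply]
  rw [Finset.sum_eq_single ν]
  · simp [ee]
  · intro κ _ hκ
    simp [ee, Pi.single_apply, hκ.symm]
  · intro h; exact absurd (Finset.mem_univ ν) h

lemma det_swap_rows (g : Fin 3 → Fin 4 → ℝ) (a : Fin 3) (μ κ : Fin 4) :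
    Matrix.det (Matrix.of (Fin.cons (ee μ) (Function.update g a (ee κ)))) =
      - Matrix.det (Matrix.of (Fin.cons (ee κ) (Function.update g a (ee μ)))) := by
  set M : Matrix (Fin 4) (Fin 4) ℝ :=
    Matrix.of (Fin.cons (ee κ) (Function.update g a (ee μ))) with hM
  have hperm := Matrix.det_permute (Equiv.swap (0 : Fin 4) a.succ) M
  have hsubm : M.submatrix (Equiv.swap (0 : Fin 4) a.succ) id =
      Matrix.of (Fin.cons (ee μ) (Function.update g a (ee κ))) := by
    ext i j
    rw [Matrix.submatrix_apply, id]
    refine Fin.cases ?_ (fun b => ?_) i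
    · rw [Equiv.swap_apply_left]
      show M a.succ j = _
      show (Fin.cons (ee κ) (Function.update g a (ee μ)) : Fin 4 → Fin 4 → ℝ) a.succ j = _
      rw [Fin.cons_succ, Function.update_self]
      rfl
    · by_cases hba : b = a
      · subst hba
        rw [Equiv.swap_apply_right]
        show M 0 j = _
        show (Fin.cons (ee κ) (Function.update g b (ee μ)) : Fin 4 → Fin 4 → ℝ) 0 j = _
        rw [Fin.cons_zero]
        show ee κ j = (Fin.cons (ee μ) (Function.update g b (ee κ)) : Fin 4 → Fin 4 → ℝ) b.succ j
        rw [Fin.cons_succ, Function.update_self]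
      · rw [Equiv.swap_apply_of_ne_of_ne (Fin.succ_ne_zero b) (by
          simpa [Fin.succ_inj] using hba)]
        show (Fin.cons (ee κ) (Function.update g a (ee μ)) : Fin 4 → Fin 4 → ℝ) b.succ j = _
        rw [Fin.cons_succ, Function.update_of_ne hba]
        show g b j = (Fin.cons (ee μ) (Function.update g a (ee κ)) : Fin 4 → Fin 4 → ℝ) b.succ j
        rw [Fin.cons_succ, Function.update_of_ne hba]
    
  rw [hsubm] at hperm
  rw [hperm, Equiv.Perm.sign_swap (Fin.succ_ne_zero a).symm]
  simp

lemma sum_symm_antisym (H D : Fin 4 → Fin 4 → ℝ) (hH : ∀ μ κ, H μ κ = H κ μ)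
    (hD : ∀ μ κ, D μ κ = -D κ μ) : ∑ μ, ∑ κ, H μ κ * D μ κ = 0 := by
  have key : (∑ μ, ∑ κ, H μ κ * D μ κ) = -(∑ μ, ∑ κ, H μ κ * D μ κ) := by
    conv_lhs => rw [Finset.sum_comm]
    rw [← Finset.sum_neg_distrib]
    refine Finset.sum_congr rfl fun μ _ => ?_
    rw [← Finset.sum_neg_distrib]
    refine Finset.sum_congr rfl fun κ _ => ?_
    rw [hH κ μ, hD κ μ]
    ring
  linarith

lemma div_vvec (G : (Fin 4 → ℝ) → Fin 3 → Fin 4 → ℝ) (x : Fin 4 → ℝ)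
    (G' : Fin 3 → ((Fin 4 → ℝ) →L[ℝ] (Fin 4 → ℝ)))
    (hG : ∀ a, HasFDerivAt (fun y => G y a) (G' a) x)
    (hsym : ∀ a μ κ, G' a (ee μ) κ = G' a (ee κ) μ) :
    ∑ μ, fderiv ℝ (fun y => vvec (G y) μ) x (ee μ) = 0 := by
  have main : ∀ μ : Fin 4, fderiv ℝ (fun y => vvec (G y) μ) x (ee μ) =
      ∑ a : Fin 3, ∑ κ : Fin 4, G' a (ee μ) κ *
        Matrix.det (Matrix.of (Fin.cons (ee μ) (Function.update (G x) a (ee κ)))) := by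
    intro μ
    set rows : Fin 4 → (Fin 4 → ℝ) → (Fin 4 → ℝ) :=
      Fin.cons (fun _ => ee μ) (fun a y => G y a) with hrowsdef
    set rows' : Fin 4 → ((Fin 4 → ℝ) →L[ℝ] (Fin 4 → ℝ)) := Fin.cons 0 G' with hrows'def
    have hrows : ∀ i, HasFDerivAt (rows i) (rows' i) x := by
      intro i
      refine Fin.cases ?_ (fun a => ?_) i
      · have h1 : rows 0 = fun _ => ee μ := by rw [hrowsdef, Fin.cons_zero]
        have h2 : rows' 0 = 0 := by rw [hrows'def, Fin.cons_zero]
        rw [h1, h2]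
        exact hasFDerivAt_const (ee μ) x
      · have h1 : rows a.succ = fun y => G y a := by rw [hrowsdef, Fin.cons_succ]
        have h2 : rows' a.succ = G' a := by rw [hrows'def, Fin.cons_succ]
        rw [h1, h2]
        exact hG a
    have hfun : (fun y => vvec (G y) μ) = fun y => detCM (fun i => rows i y) := by
      funext y
      rw [vvec, ← detCM_apply]
      congr 1
      funext i
      refine Fin.cases ?_ (fun a => ?_) i
      · rw [hrowsdef]
        show (Fin.cons (ee μ) (G y) : Fin 4 → Fin 4 → ℝ) 0 =
          (Fin.cons (fun _ => ee μ) (fun a y => G y a) : Fin 4 → (Fin 4 → ℝ) → (Fin 4 → ℝ)) 0 y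
        rw [Fin.cons_zero, Fin.cons_zero]
      · rw [hrowsdef]
        show (Fin.cons (ee μ) (G y) : Fin 4 → Fin 4 → ℝ) a.succ =
          (Fin.cons (fun _ => ee μ) (fun a y => G y a) : Fin 4 → (Fin 4 → ℝ) → (Fin 4 → ℝ)) a.succ y
        rw [Fin.cons_succ, Fin.cons_succ]
    have hd : HasFDerivAt (fun y => vvec (G y) μ)
        (∑ i : Fin 4, (detCM.toContinuousLinearMap (fun j => rows j x) i) ∘L rows' i) x := by
      rw [hfun]
      exact HasFDerivAt.multilinear_comp detCM hrows
    rw [hd.fderiv]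
    rw [ContinuousLinearMap.sum_apply]
    have hMx : (fun j => rows j x) = (Fin.cons (ee μ) (G x) : Fin 4 → Fin 4 → ℝ) := by
      funext i
      refine Fin.cases ?_ (fun a => ?_) i
      · rw [hrowsdef]
        show (Fin.cons (fun _ => ee μ) (fun a y => G y a) : Fin 4 → (Fin 4 → ℝ) → (Fin 4 → ℝ)) 0 x
          = (Fin.cons (ee μ) (G x) : Fin 4 → Fin 4 → ℝ) 0
        rw [Fin.cons_zero, Fin.cons_zero]
      · rw [hrowsdef]
        show (Fin.cons (fun _ => ee μ) (fun a y => G y a) : Fin 4 → (Fin 4 → ℝ) → (Fin 4 → ℝ)) a.succ x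
          = (Fin.cons (ee μ) (G x) : Fin 4 → Fin 4 → ℝ) a.succ
        rw [Fin.cons_succ, Fin.cons_succ]
    have term : ∀ i : Fin 4,
        ((detCM.toContinuousLinearMap (fun j => rows j x) i) ∘L rows' i) (ee μ) =
        detCM (Function.update (Fin.cons (ee μ) (G x) : Fin 4 → Fin 4 → ℝ) i (rows' i (ee μ))) := by
      intro i
      rw [ContinuousLinearMap.comp_apply, ContinuousMultilinearMap.toContinuousLinearMap_apply, hMx]
    rw [Finset.sum_congr rfl fun i _ => term i]
    rw [Fin.sum_univ_succ]
    have hzero : detCM (Function.update (Fin.cons (ee μ) (G x) : Fin 4 → Fin 4 → ℝ) 0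
        (rows' 0 (ee μ))) = 0 := by
      have h2 : rows' 0 = 0 := by rw [hrows'def, Fin.cons_zero]
      rw [h2]
      exact detCM.toMultilinearMap.map_coord_zero 0 (Function.update_self _ _ _)
    rw [hzero, zero_add]
    refine Finset.sum_congr rfl fun a _ => ?_
    have h2 : rows' a.succ = G' a := by rw [hrows'def, Fin.cons_succ]
    rw [h2]
    have hlin : ∀ w : Fin 4 → ℝ,
        detCM (Function.update (Fin.cons (ee μ) (G x) : Fin 4 → Fin 4 → ℝ) a.succ w)
        = ∑ κ, w κ * Matrix.det (Matrix.of (Fin.cons (ee μ)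
            (Function.update (G x) a (ee κ)))) := by
      intro w
      conv_lhs => rw [eq_sum_ee w]
      rw [show (detCM (Function.update (Fin.cons (ee μ) (G x) : Fin 4 → Fin 4 → ℝ) a.succ
          (∑ κ, w κ • ee κ))) = detCM.toMultilinearMap (Function.update
          (Fin.cons (ee μ) (G x) : Fin 4 → Fin 4 → ℝ) a.succ (∑ κ, w κ • ee κ)) from rfl,
        detCM.toMultilinearMap.map_update_sum]
      refine Finset.sum_congr rfl fun κ _ => ?_
      rw [detCM.toMultilinearMap.map_update_smul, smul_eq_mul]
      congr 1
      rw [← Fin.cons_update]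
      rfl
    exact hlin _
  rw [Finset.sum_congr rfl fun μ _ => main μ]
  rw [Finset.sum_comm]
  refine Finset.sum_eq_zero fun a _ => ?_
  exact sum_symm_antisym (fun μ κ => G' a (ee μ) κ)
    (fun μ κ => Matrix.det (Matrix.of (Fin.cons (ee μ) (Function.update (G x) a (ee κ)))))
    (hsym a) (fun μ κ => det_swap_rows (G x) a μ κ)
lemma vvec_hasFDerivAt (G : (Fin 4 → ℝ) → Fin 3 → Fin 4 → ℝ) (x : Fin 4 → ℝ)
    (G' : Fin 3 → ((Fin 4 → ℝ) →L[ℝ] (Fin 4 → ℝ)))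
    (hG : ∀ a, HasFDerivAt (fun y => G y a) (G' a) x) (μ : Fin 4) :
    DifferentiableAt ℝ (fun y => vvec (G y) μ) x := by
  set rows : Fin 4 → (Fin 4 → ℝ) → (Fin 4 → ℝ) :=
    Fin.cons (fun _ => ee μ) (fun a y => G y a) with hrowsdef
  set rows' : Fin 4 → ((Fin 4 → ℝ) →L[ℝ] (Fin 4 → ℝ)) := Fin.cons 0 G' with hrows'def
  have hrows : ∀ i, HasFDerivAt (rows i) (rows' i) x := by
    intro i
    refine Fin.cases ?_ (fun a => ?_) i
    · have h1 : rows 0 = fun _ => ee μ := by rw [hrowsdef, Fin.cons_zero]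
      have h2 : rows' 0 = 0 := by rw [hrows'def, Fin.cons_zero]
      rw [h1, h2]
      exact hasFDerivAt_const (ee μ) x
    · have h1 : rows a.succ = fun y => G y a := by rw [hrowsdef, Fin.cons_succ]
      have h2 : rows' a.succ = G' a := by rw [hrows'def, Fin.cons_succ]
      rw [h1, h2]
      exact hG a
  have hfun : (fun y => vvec (G y) μ) = fun y => detCM (fun i => rows i y) := by
    funext y
    rw [vvec, ← detCM_apply]
    congr 1
    funext i
    refine Fin.cases ?_ (fun a => ?_) i
    · rw [hrowsdef]
      show (Fin.cons (ee μ) (G y) : Fin 4 → Fin 4 → ℝ) 0 =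
        (Fin.cons (fun _ => ee μ) (fun a y => G y a) : Fin 4 → (Fin 4 → ℝ) → (Fin 4 → ℝ)) 0 y
      rw [Fin.cons_zero, Fin.cons_zero]
    · rw [hrowsdef]
      show (Fin.cons (ee μ) (G y) : Fin 4 → Fin 4 → ℝ) a.succ =
        (Fin.cons (fun _ => ee μ) (fun a y => G y a) : Fin 4 → (Fin 4 → ℝ) → (Fin 4 → ℝ)) a.succ y
      rw [Fin.cons_succ, Fin.cons_succ]
  rw [hfun]
  exact (HasFDerivAt.multilinear_comp detCM hrows).differentiableAt
end S6

open Topology in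
/-- for a submersion `φ` with `σ₃ > 0` and unit timelike vertical
vector field `U`, one has `div U + U(ln √σ₃) = 0`. -/
theorem statement6 (Ω : Set (Fin 4 → ℝ)) (hΩ : IsOpen Ω)
    (φ : (Fin 4 → ℝ) → Fin 3 → ℝ) (hφ : ContDiffOn ℝ (⊤ : ℕ∞) φ Ω)
    (hσ : ∀ x ∈ Ω, 0 < sigma3 φ x)
    (U : (Fin 4 → ℝ) → Fin 4 → ℝ) (hUsm : ContDiffOn ℝ (⊤ : ℕ∞) U Ω)
    (hUnit : ∀ x ∈ Ω, eta (U x) (U x) = -1)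
    (hvert : ∀ x ∈ Ω, ∀ a : Fin 3, ∑ μ, pd μ (fun y => φ y a) x * U x μ = 0) :
    ∀ x ∈ Ω,
      (∑ μ, pd μ (fun y => U y μ) x)
        + (∑ μ, U x μ * pd μ (fun y => Real.log (Real.sqrt (sigma3 φ y))) x) = 0 := by
  intro x hx
  have hΩx : Ω ∈ 𝓝 x := hΩ.mem_nhds hx
  have hφa : ∀ a : Fin 3, ContDiffOn ℝ (⊤ : ℕ∞) (fun y => φ y a) Ω := fun a =>
    contDiffOn_pi.1 hφ a
  set G : (Fin 4 → ℝ) → Fin 3 → Fin 4 → ℝ :=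
    fun y a ν => fderiv ℝ (fun z => φ z a) y (S6.ee ν) with hGdef
  set V : (Fin 4 → ℝ) → Fin 4 → ℝ := fun y μ => S6.vvec (G y) μ with hVdef
  set h : (Fin 4 → ℝ) → ℝ := fun y => ∑ μ, etaCoef μ * U y μ * V y μ with hhdef
  -- pointwise linear algebra on Ω
  have key : ∀ y ∈ Ω, (h y)^2 = sigma3 φ y ∧ ∀ μ, U y μ = -(V y μ) / h y := by
    intro y hy
    have halg := S6.main_alg (G y) (U y)
      (fun a => hvert y hy a) (hUnit y hy) (hσ y hy)
    exact halg
  -- differentiability of U components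
  have hUd : DifferentiableAt ℝ U x := (hUsm.differentiableOn (by simp)).differentiableAt hΩx
  have hUdμ : ∀ μ, DifferentiableAt ℝ (fun y => U y μ) x := fun μ =>
    differentiableAt_pi.1 hUd μ
  -- derivative data of the gradient rows
  have hFd : ∀ a : Fin 3, ContDiffOn ℝ (⊤ : ℕ∞) (fun y => fderiv ℝ (fun z => φ z a) y) Ω :=
    fun a => (hφa a).fderiv_of_isOpen hΩ (by exact_mod_cast (le_top : ((⊤:ℕ∞) + 1 : ℕ∞) ≤ ⊤))
  have hFad : ∀ a : Fin 3, HasFDerivAt (fun y => fderiv ℝ (fun z => φ z a) y)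
      (fderiv ℝ (fun y => fderiv ℝ (fun z => φ z a) y) x) x := fun a =>
    ((((hFd a).differentiableOn (by simp)).differentiableAt hΩx)).hasFDerivAt
  set G' : Fin 3 → ((Fin 4 → ℝ) →L[ℝ] (Fin 4 → ℝ)) := fun a =>
    ContinuousLinearMap.pi (fun ν => (ContinuousLinearMap.apply ℝ ℝ (S6.ee ν)).comp
      (fderiv ℝ (fun y => fderiv ℝ (fun z => φ z a) y) x)) with hG'def
  have hGa : ∀ a, HasFDerivAt (fun y => G y a) (G' a) x := by
    intro a
    apply hasFDerivAt_pi.2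
    intro ν
    exact ((ContinuousLinearMap.apply ℝ ℝ (S6.ee ν)).hasFDerivAt).comp x (hFad a)
  have hsym : ∀ a μ κ, G' a (S6.ee μ) κ = G' a (S6.ee κ) μ := by
    intro a μ κ
    have hsy := (((hφa a).contDiffAt hΩx)).isSymmSndFDerivAt (n := (⊤ : ℕ∞))
      (by
      rw [minSmoothness_of_isRCLikeNormedField]
      exact WithTop.coe_le_coe.2 le_top)
    have h1 : G' a (S6.ee μ) κ
        = fderiv ℝ (fderiv ℝ (fun z => φ z a)) x (S6.ee μ) (S6.ee κ) := rfl
    have h2 : G' a (S6.ee κ) μ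
        = fderiv ℝ (fderiv ℝ (fun z => φ z a)) x (S6.ee κ) (S6.ee μ) := rfl
    rw [h1, h2]
    exact hsy (S6.ee μ) (S6.ee κ)
  -- divergence of V vanishes
  have hdivV : ∑ μ, fderiv ℝ (fun y => V y μ) x (S6.ee μ) = 0 :=
    S6.div_vvec G x G' hGa hsym
  have hVdiff : ∀ μ, DifferentiableAt ℝ (fun y => V y μ) x := fun μ =>
    S6.vvec_hasFDerivAt G x G' hGa μ
  -- differentiability of h
  have hhd : DifferentiableAt ℝ h x := by
    rw [hhdef]
    apply DifferentiableAt.fun_sum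
    intro μ _
    exact ((hUdμ μ).const_mul (etaCoef μ)).mul (hVdiff μ)
  have hne : h x ≠ 0 := by
    intro h0
    have h1 := (key x hx).1
    rw [h0] at h1
    simp only [ne_eq, OfNat.ofNat_ne_zero, not_false_eq_true, zero_pow] at h1
    have := hσ x hx
    rw [← h1] at this
    exact lt_irrefl 0 this
  -- eventual equalities
  have hUev : ∀ μ, (fun y => U y μ) =ᶠ[𝓝 x] fun y => -(V y μ) * (h y)⁻¹ := by
    intro μ
    refine Filter.eventuallyEq_of_mem hΩx fun y hy => ?_
    rw [(key y hy).2 μ, div_eq_mul_inv]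
  have hlogev : (fun y => Real.log (Real.sqrt (sigma3 φ y))) =ᶠ[𝓝 x]
      fun y => Real.log (h y) := by
    refine Filter.eventuallyEq_of_mem hΩx fun y hy => ?_
    have h2 := (key y hy).1
    show Real.log (Real.sqrt (sigma3 φ y)) = Real.log (h y)
    rw [← h2, Real.sqrt_sq_eq_abs, Real.log_abs]
  -- derivative of U components
  have hdU : ∀ μ, pd μ (fun y => U y μ) x =
      (V x μ) * (fderiv ℝ h x (S6.ee μ)) * ((h x)^2)⁻¹
        - (fderiv ℝ (fun y => V y μ) x (S6.ee μ)) * (h x)⁻¹ := by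
    intro μ
    have hVn : HasFDerivAt (fun y => -(V y μ)) (-(fderiv ℝ (fun y => V y μ) x)) x :=
      ((hVdiff μ).hasFDerivAt).neg
    have hinv : HasFDerivAt (fun y => (h y)⁻¹)
        ((-((h x) ^ 2)⁻¹) • fderiv ℝ h x) x :=
      (hasDerivAt_inv hne).comp_hasFDerivAt x (hhd.hasFDerivAt)
    have hq : HasFDerivAt (fun y => -(V y μ) * (h y)⁻¹) _ x := hVn.mul hinv
    rw [pd, (hUev μ).fderiv_eq, hq.fderiv]
    simp only [ContinuousLinearMap.add_apply, ContinuousLinearMap.coe_smul',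
      Pi.smul_apply, ContinuousLinearMap.neg_apply, smul_eq_mul,
      show (Pi.single μ (1:ℝ) : Fin 4 → ℝ) = S6.ee μ from rfl]
    ring
  -- derivative of the log term
  have hdL : ∀ μ : Fin 4, pd μ (fun y => Real.log (Real.sqrt (sigma3 φ y))) x
      = (fderiv ℝ h x (S6.ee μ)) * (h x)⁻¹ := by
    intro μ
    have hl := (hhd.hasFDerivAt).log hne
    rw [pd, hlogev.fderiv_eq, hl.fderiv]
    simp only [ContinuousLinearMap.coe_smul', Pi.smul_apply, smul_eq_mul,
      show (Pi.single μ (1:ℝ) : Fin 4 → ℝ) = S6.ee μ from rfl]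
    ring
  have hUx : ∀ μ, U x μ = -(V x μ) / h x := (key x hx).2
  have e1 : (∑ μ, pd μ (fun y => U y μ) x)
      + (∑ μ, U x μ * pd μ (fun y => Real.log (Real.sqrt (sigma3 φ y))) x)
      = ∑ μ, (-(fderiv ℝ (fun y => V y μ) x (S6.ee μ)) * (h x)⁻¹) := by
    rw [← Finset.sum_add_distrib]
    refine Finset.sum_congr rfl fun μ _ => ?_
    rw [hdU μ, hdL μ, hUx μ]
    field_simp
    ring
  rw [e1, ← Finset.sum_mul, Finset.sum_neg_distrib, hdivV, neg_zero, zero_mul]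
end
end

section
/- Let Ω = { x ∈ ℝ⁴ : x₄ > √(x₁²+x₂²+x₃²) } be the interior of the forward light cone and set τ(x) = √(x₄² − x₁² − x₂² − x₃²). Define U(x) = x / τ(x). Then η(U,U) = −1 on Ω, and for every real number k > 0 the triple (U, ρ, p) with ρ(x) = τ(x)^{−6k} and p = (2k−1)ρ satisfies both the relativistic Euler equations and the energy conservation equation along flow lines on Ω. (Generalized Hwa–Bjorken flow of Example 3.1.) -/
open scoped BigOperators

noncomputable section

/-- The interior of the forward light cone in Minkowski `ℝ⁴`. -/
def lightcone : Set (Fin 4 → ℝ) :=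
  {x | Real.sqrt ((x 0) ^ 2 + (x 1) ^ 2 + (x 2) ^ 2) < x 3}

/-- `τ(x) = √(x₄² − x₁² − x₂² − x₃²)`. -/
def tau (x : Fin 4 → ℝ) : ℝ :=
  Real.sqrt ((x 3) ^ 2 - (x 0) ^ 2 - (x 1) ^ 2 - (x 2) ^ 2)

/-- The extended Hwa–Bjorken flow vector field `U(x) = x / τ(x)`. -/
def Ubj (x : Fin 4 → ℝ) : Fin 4 → ℝ := fun μ => x μ / tau x

lemma lc_pos {x : Fin 4 → ℝ} (hx : x ∈ lightcone) :
    0 < x 3 ^ 2 - x 0 ^ 2 - x 1 ^ 2 - x 2 ^ 2 := by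
  have h : Real.sqrt (x 0 ^ 2 + x 1 ^ 2 + x 2 ^ 2) < x 3 := hx
  have h3 : 0 < x 3 := lt_of_le_of_lt (Real.sqrt_nonneg _) h
  have h4 := (Real.sqrt_lt' h3).mp h
  linarith

lemma tau_pos {x : Fin 4 → ℝ} (hx : x ∈ lightcone) : 0 < tau x :=
  Real.sqrt_pos.mpr (lc_pos hx)

lemma tau_sq {x : Fin 4 → ℝ} (hx : x ∈ lightcone) :
    tau x ^ 2 = x 3 ^ 2 - x 0 ^ 2 - x 1 ^ 2 - x 2 ^ 2 :=
  Real.sq_sqrt (lc_pos hx).le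

def prj (i : Fin 4) : (Fin 4 → ℝ) →L[ℝ] ℝ := ContinuousLinearMap.proj i

def Lt (x : Fin 4 → ℝ) : (Fin 4 → ℝ) →L[ℝ] ℝ :=
  (x 3 / tau x) • prj 3 - (x 0 / tau x) • prj 0
    - (x 1 / tau x) • prj 1 - (x 2 / tau x) • prj 2

lemma Lt_apply (x : Fin 4 → ℝ) (μ : Fin 4) :
    Lt x (Pi.single μ 1) = -(etaCoef μ) * x μ / tau x := by
  fin_cases μ <;>
    simp [Lt, prj, etaCoef, Pi.single_apply] <;> ring

lemma hasFDerivAt_tau {x : Fin 4 → ℝ} (hx : x ∈ lightcone) :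
    HasFDerivAt tau (Lt x) x := by
  have hp : ∀ i : Fin 4, HasFDerivAt (fun y : Fin 4 → ℝ => y i)
      (prj i) x := by
    intro i
    exact (prj i).hasFDerivAt
  have hsq : ∀ i : Fin 4, HasFDerivAt (fun y : Fin 4 → ℝ => y i ^ 2)
      ((2 * x i) • prj i) x := by
    intro i
    have h2 := (hp i).mul (hp i)
    have hf : (fun y : Fin 4 → ℝ => y i ^ 2) = fun y => y i * y i := by funext y; ring
    rw [hf]
    refine h2.congr_fderiv ?_
    ext v
    simp
    ring
  have hq : HasFDerivAt (fun y : Fin 4 → ℝ => y 3 ^ 2 - y 0 ^ 2 - y 1 ^ 2 - y 2 ^ 2)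
      ((2 * x 3) • prj 3 - (2 * x 0) • prj 0
        - (2 * x 1) • prj 1 - (2 * x 2) • prj 2) x :=
    (((hsq 3).sub (hsq 0)).sub (hsq 1)).sub (hsq 2)
  have h := hq.sqrt (lc_pos hx).ne'
  have ht := tau_pos hx
  refine h.congr_fderiv ?_
  ext v
  simp [Lt, tau]
  field_simp

lemma pd_U {x : Fin 4 → ℝ} (hx : x ∈ lightcone) (ν μ : Fin 4) :
    pd μ (fun y => Ubj y ν) x
      = (if μ = ν then (tau x)⁻¹ else 0) + etaCoef μ * x μ * x ν / tau x ^ 3 := by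
  have ht := tau_pos hx
  have hτ := hasFDerivAt_tau hx
  have hinv : HasFDerivAt (fun y => (tau y)⁻¹) ((-(tau x ^ 2)⁻¹) • Lt x) x :=
    (hasDerivAt_inv ht.ne').comp_hasFDerivAt x hτ
  have hU : HasFDerivAt (fun y => Ubj y ν)
      (x ν • ((-(tau x ^ 2)⁻¹) • Lt x) + (tau x)⁻¹ • prj ν) x := by
    have hf : (fun y => Ubj y ν) = fun y : Fin 4 → ℝ => y ν * (tau y)⁻¹ := by
      funext y; simp [Ubj, div_eq_mul_inv]
    rw [hf]
    exact (prj ν).hasFDerivAt.mul hinv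
  rw [pd, hU.fderiv]
  have hpr : (prj ν) (Pi.single μ 1) = if μ = ν then (1:ℝ) else 0 := by
    simp [prj, Pi.single_apply, eq_comm]
  simp only [ContinuousLinearMap.add_apply, ContinuousLinearMap.smul_apply, Lt_apply, hpr,
    smul_eq_mul]
  rcases eq_or_ne μ ν with h | h
  · subst h; simp; field_simp; ring
  · simp [h]; field_simp

lemma pd_rpow {x : Fin 4 → ℝ} (hx : x ∈ lightcone) (a : ℝ) (μ : Fin 4) :
    pd μ (fun y => tau y ^ a) x = a * tau x ^ (a - 1) * (-(etaCoef μ) * x μ / tau x) := by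
  have h := (hasFDerivAt_tau hx).rpow_const (p := a) (Or.inl (tau_pos hx).ne')
  rw [pd, h.fderiv]
  simp [Lt_apply]

lemma pd_cmul {x : Fin 4 → ℝ} (hx : x ∈ lightcone) (c a : ℝ) (μ : Fin 4) :
    pd μ (fun y => c * tau y ^ a) x
      = c * (a * tau x ^ (a - 1) * (-(etaCoef μ) * x μ / tau x)) := by
  have h := ((hasFDerivAt_tau hx).rpow_const (p := a) (Or.inl (tau_pos hx).ne')).const_mul c
  rw [pd, h.fderiv]
  simp [Lt_apply]


lemma eta_UU {x : Fin 4 → ℝ} (hx : x ∈ lightcone) : eta (Ubj x) (Ubj x) = -1 := by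
  have ht := (tau_pos hx).ne'
  have h2 := tau_sq hx
  simp only [eta, Ubj, Fin.sum_univ_four]
  simp [etaCoef]
  field_simp
  linear_combination h2

lemma sum_U_pdU {x : Fin 4 → ℝ} (hx : x ∈ lightcone) (ν : Fin 4) :
    (∑ μ, Ubj x μ * pd μ (fun y => Ubj y ν) x) = 0 := by
  have ht := (tau_pos hx).ne'
  have h2 := tau_sq hx
  simp only [Fin.sum_univ_four, pd_U hx]
  simp only [Ubj]
  fin_cases ν
  · simp [etaCoef]; field_simp; linear_combination (x 0) * h2
  · simp [etaCoef]; field_simp; linear_combination (x 1) * h2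
  · simp [etaCoef]; field_simp; linear_combination (x 2) * h2
  · simp [etaCoef]; field_simp; linear_combination (x 3) * h2

lemma grad_part {x : Fin 4 → ℝ} (hx : x ∈ lightcone) (c a : ℝ) (ν : Fin 4) :
    mgrad (fun y => c * tau y ^ a) x ν
      + eta (mgrad (fun y => c * tau y ^ a) x) (Ubj x) * Ubj x ν = 0 := by
  have ht := tau_pos hx
  have h2 := tau_sq hx
  have hsub : tau x ^ (a - 1) = tau x ^ a / tau x := by
    rw [Real.rpow_sub ht, Real.rpow_one]
  simp only [mgrad, eta, Fin.sum_univ_four, pd_cmul hx, hsub, Ubj]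
  have ht' := ht.ne'
  fin_cases ν
  · simp [etaCoef]; field_simp
    linear_combination (-(c * a * tau x ^ a * x 0)) * h2
  · simp [etaCoef]; field_simp
    linear_combination (-(c * a * tau x ^ a * x 1)) * h2
  · simp [etaCoef]; field_simp
    linear_combination (-(c * a * tau x ^ a * x 2)) * h2
  · simp [etaCoef]; field_simp
    linear_combination (-(c * a * tau x ^ a * x 3)) * h2

lemma energy_part {x : Fin 4 → ℝ} (hx : x ∈ lightcone) (k : ℝ) :
    (tau x ^ (-(6*k)) + (2*k-1) * tau x ^ (-(6*k))) * (∑ μ, pd μ (fun y => Ubj y μ) x)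
      + (∑ μ, Ubj x μ * pd μ (fun y => tau y ^ (-(6*k))) x) = 0 := by
  have ht := tau_pos hx
  have h2 := tau_sq hx
  have hsub : tau x ^ (-(6*k) - 1) = tau x ^ (-(6*k)) / tau x := by
    rw [Real.rpow_sub ht, Real.rpow_one]
  have ht' := ht.ne'
  simp only [Fin.sum_univ_four, pd_U hx, pd_rpow hx, hsub]
  simp only [Ubj]
  simp [etaCoef]
  field_simp
  linear_combination (8 * k * tau x ^ (-(6*k))) * h2

/-- the extended Hwa–Bjorken flow `U = x/τ` with
`ρ = τ^{−6k}`, `p = (2k−1)ρ` solves the relativistic Euler equations and the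
energy conservation equation on the interior of the forward light cone. -/
theorem statement7 :
    (∀ x ∈ lightcone, eta (Ubj x) (Ubj x) = -1) ∧
    ∀ k : ℝ, 0 < k →
      EulerEqs lightcone Ubj (fun x => tau x ^ (-(6 * k)))
        (fun x => (2 * k - 1) * tau x ^ (-(6 * k))) ∧
      EnergyCons lightcone Ubj (fun x => tau x ^ (-(6 * k)))
        (fun x => (2 * k - 1) * tau x ^ (-(6 * k))) := by
  refine ⟨fun x hx => eta_UU hx, fun k hk => ⟨?_, ?_⟩⟩
  · intro x hx ν
    rw [sum_U_pdU hx ν, mul_zero, zero_add]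
    exact grad_part hx (2 * k - 1) (-(6 * k)) ν
  · intro x hx
    exact energy_part hx k
end
end

section
/- Let Ω = { x ∈ ℝ⁴ : x₄ > √(x₁²+x₂²+x₃²) }, τ(x) = √(x₄² − x₁² − x₂² − x₃²), and U(x) = x / τ(x). Set ω_μ = Σ_α η_{μα}U^α and g^H_{μν} = η_{μν} + ω_μ ω_ν. Then U is shear-free: (ℒ_U g^H)_{μν} = (2/3)·(Σ_α ∂_α U^α)·g^H_{μν} on Ω for all μ, ν, i.e. ℒ_U g^H − (2/3)(div U)·g^H = 0. -/
open scoped BigOperators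

noncomputable section

/-- The η-dual 1-form of `Ubj`: `ω_μ = Σ_α η_{μα} x^α / τ`. -/
def omegaBj (x : Fin 4 → ℝ) : Fin 4 → ℝ := fun μ => etaCoef μ * x μ / tau x

/-- The horizontal (spatial) part of the metric: `g^H = η + ω ⊗ ω`. -/
def gH (x : Fin 4 → ℝ) (μ ν : Fin 4) : ℝ := etaMat μ ν + omegaBj x μ * omegaBj x ν

/-- Componentwise Lie derivative of a symmetric 2-tensor `T` along `U`:
`(ℒ_U T)_{μν} = Σ_α ( U^α ∂_α T_{μν} + ∂_μ U^α · T_{αν} + ∂_ν U^α · T_{μα} )`. -/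
def lieD (U : (Fin 4 → ℝ) → Fin 4 → ℝ) (T : (Fin 4 → ℝ) → Fin 4 → Fin 4 → ℝ)
    (x : Fin 4 → ℝ) (μ ν : Fin 4) : ℝ :=
  ∑ α, (U x α * pd α (fun y => T y μ ν) x
        + pd μ (fun y => U y α) x * T x α ν
        + pd ν (fun y => U y α) x * T x μ α)

-- ===== auxiliary material for statement9 =====

/-- The `i`-th coordinate projection as a continuous linear map. -/
def cproj (i : Fin 4) : (Fin 4 → ℝ) →L[ℝ] ℝ := ContinuousLinearMap.proj i

lemma cproj_single (i α : Fin 4) : cproj i (Pi.single α 1) = if i = α then 1 else 0 := by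
  simp [cproj, Pi.single_apply]

/-- Derivative of the quadratic form `q(y) = y₃² − y₀² − y₁² − y₂²`. -/
def DQ (x : Fin 4 → ℝ) : (Fin 4 → ℝ) →L[ℝ] ℝ :=
  (2 * x 3) • cproj 3 - (2 * x 0) • cproj 0 - (2 * x 1) • cproj 1 - (2 * x 2) • cproj 2

lemma hasDQ (x : Fin 4 → ℝ) :
    HasFDerivAt (fun y : Fin 4 → ℝ => (y 3) ^ 2 - (y 0) ^ 2 - (y 1) ^ 2 - (y 2) ^ 2) (DQ x) x := by
  have h : ∀ i : Fin 4, HasFDerivAt (fun y : Fin 4 → ℝ => (y i) ^ 2) ((2 * x i) • cproj i) x := by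
    intro i
    have h0 : HasFDerivAt (fun y : Fin 4 → ℝ => y i) (cproj i) x :=
      (ContinuousLinearMap.proj i : (Fin 4 → ℝ) →L[ℝ] ℝ).hasFDerivAt
    have h1 := h0.fun_mul h0
    simpa [pow_two, two_mul, add_smul] using h1
  exact (((h 3).sub (h 0)).sub (h 1)).sub (h 2)

lemma DQ_single (x : Fin 4 → ℝ) (α : Fin 4) :
    DQ x (Pi.single α 1) = -(2 * etaCoef α * x α) := by
  fin_cases α <;>
    simp [DQ, ContinuousLinearMap.sub_apply, ContinuousLinearMap.smul_apply,
      smul_eq_mul, cproj_single, etaCoef]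

variable {x : Fin 4 → ℝ}

lemma tau_pos_s9 (hq : 0 < (x 3) ^ 2 - (x 0) ^ 2 - (x 1) ^ 2 - (x 2) ^ 2) : 0 < tau x := Real.sqrt_pos.mpr hq

lemma hasTau (hq : 0 < (x 3) ^ 2 - (x 0) ^ 2 - (x 1) ^ 2 - (x 2) ^ 2) : HasFDerivAt tau ((1 / (2 * tau x)) • DQ x) x := by
  have h := (hasDQ x).sqrt (ne_of_gt hq)
  delta tau
  simpa using h

lemma Dtau_single (hq : 0 < (x 3) ^ 2 - (x 0) ^ 2 - (x 1) ^ 2 - (x 2) ^ 2) (α : Fin 4) :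
    ((1 / (2 * tau x)) • DQ x) (Pi.single α 1) = -omegaBj x α := by
  have ht0 : tau x ≠ 0 := (tau_pos_s9 hq).ne'
  rw [ContinuousLinearMap.smul_apply, DQ_single]
  simp only [smul_eq_mul, omegaBj]
  field_simp

/-- derivative of `y ↦ (tau y)⁻¹`. -/
lemma hasInvTau (hq : 0 < (x 3) ^ 2 - (x 0) ^ 2 - (x 1) ^ 2 - (x 2) ^ 2) :
    HasFDerivAt (fun y => (tau y)⁻¹)
      ((-(tau x ^ 2)⁻¹) • ((1 / (2 * tau x)) • DQ x)) x :=
  (hasDerivAt_inv (tau_pos_s9 hq).ne').comp_hasFDerivAt x (hasTau hq)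

lemma hasUbj (hq : 0 < (x 3) ^ 2 - (x 0) ^ 2 - (x 1) ^ 2 - (x 2) ^ 2) (μ : Fin 4) :
    HasFDerivAt (fun y => Ubj y μ)
      ((x μ) • ((-(tau x ^ 2)⁻¹) • ((1 / (2 * tau x)) • DQ x)) + (tau x)⁻¹ • cproj μ) x := by
  have h0 : HasFDerivAt (fun y : Fin 4 → ℝ => y μ) (cproj μ) x :=
    (ContinuousLinearMap.proj μ : (Fin 4 → ℝ) →L[ℝ] ℝ).hasFDerivAt
  have h := h0.fun_mul (hasInvTau hq)
  simpa [Ubj, div_eq_mul_inv] using h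

lemma pd_Ubj (hq : 0 < (x 3) ^ 2 - (x 0) ^ 2 - (x 1) ^ 2 - (x 2) ^ 2) (α μ : Fin 4) :
    pd α (fun y => Ubj y μ) x
      = ((if μ = α then 1 else 0) + Ubj x μ * omegaBj x α) / tau x := by
  have ht0 : tau x ≠ 0 := (tau_pos_s9 hq).ne'
  rw [pd, (hasUbj hq μ).fderiv]
  simp only [ContinuousLinearMap.add_apply, ContinuousLinearMap.smul_apply,
    DQ_single, cproj_single, smul_eq_mul, Ubj, omegaBj]
  by_cases h : μ = α <;> simp only [h, if_true, if_false, if_pos, if_neg, reduceIte] <;>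
    field_simp <;> ring

lemma hasOmega (hq : 0 < (x 3) ^ 2 - (x 0) ^ 2 - (x 1) ^ 2 - (x 2) ^ 2) (μ : Fin 4) :
    HasFDerivAt (fun y => omegaBj y μ)
      ((etaCoef μ * x μ) • ((-(tau x ^ 2)⁻¹) • ((1 / (2 * tau x)) • DQ x))
        + (tau x)⁻¹ • (etaCoef μ • cproj μ)) x := by
  have h0 : HasFDerivAt (fun y : Fin 4 → ℝ => y μ) (cproj μ) x :=
    (ContinuousLinearMap.proj μ : (Fin 4 → ℝ) →L[ℝ] ℝ).hasFDerivAt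
  have h1 : HasFDerivAt (fun y : Fin 4 → ℝ => etaCoef μ * y μ) (etaCoef μ • cproj μ) x :=
    h0.const_mul (etaCoef μ)
  have h := h1.fun_mul (hasInvTau hq)
  simpa [omegaBj, div_eq_mul_inv] using h

lemma Domega_single (hq : 0 < (x 3) ^ 2 - (x 0) ^ 2 - (x 1) ^ 2 - (x 2) ^ 2) (μ α : Fin 4) :
    ((etaCoef μ * x μ) • ((-(tau x ^ 2)⁻¹) • ((1 / (2 * tau x)) • DQ x))
        + (tau x)⁻¹ • (etaCoef μ • cproj μ)) (Pi.single α 1)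
      = (etaCoef μ * (if μ = α then 1 else 0) + omegaBj x μ * omegaBj x α) / tau x := by
  have ht0 : tau x ≠ 0 := (tau_pos_s9 hq).ne'
  simp only [ContinuousLinearMap.add_apply, ContinuousLinearMap.smul_apply,
    DQ_single, cproj_single, smul_eq_mul, omegaBj]
  by_cases h : μ = α <;> simp only [h, if_true, if_false, reduceIte] <;>
    field_simp <;> ring

lemma pd_gH (hq : 0 < (x 3) ^ 2 - (x 0) ^ 2 - (x 1) ^ 2 - (x 2) ^ 2) (μ ν α : Fin 4) :
    pd α (fun y => gH y μ ν) x
      = (etaCoef μ * (if μ = α then 1 else 0) * omegaBj x ν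
          + etaCoef ν * (if ν = α then 1 else 0) * omegaBj x μ
          + 2 * omegaBj x μ * omegaBj x ν * omegaBj x α) / tau x := by
  have ht0 : tau x ≠ 0 := (tau_pos_s9 hq).ne'
  have h := ((hasOmega hq μ).fun_mul (hasOmega hq ν)).const_add (etaMat μ ν)
  have hfun : (fun y => gH y μ ν)
      = fun y => etaMat μ ν + omegaBj y μ * omegaBj y ν := rfl
  rw [pd, hfun, h.fderiv, ContinuousLinearMap.add_apply,
    ContinuousLinearMap.smul_apply, ContinuousLinearMap.smul_apply,
    Domega_single hq, Domega_single hq]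
  simp only [smul_eq_mul]
  by_cases h1 : μ = α <;> by_cases h2 : ν = α <;>
    simp only [h1, h2, if_true, if_false, reduceIte] <;> field_simp <;> ring


/-- the extended Hwa–Bjorken flow `U = x/τ` is shear-free:
`ℒ_U g^H = (2/3)(div U)·g^H`. -/
theorem statement9 :
    ∀ x ∈ lightcone, ∀ μ ν : Fin 4,
      lieD Ubj gH x μ ν
        = (2 / 3) * (∑ α, pd α (fun y => Ubj y α) x) * gH x μ ν := by
  intro x hx μ ν
  have h3 : 0 < x 3 := lt_of_le_of_lt (Real.sqrt_nonneg _) hx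
  have hq : 0 < (x 3) ^ 2 - (x 0) ^ 2 - (x 1) ^ 2 - (x 2) ^ 2 := by
    have h := (Real.sqrt_lt' h3).mp hx
    linarith
  have ht0 : tau x ≠ 0 := (tau_pos_s9 hq).ne'
  have ht2 : tau x ^ 2 = (x 3) ^ 2 - (x 0) ^ 2 - (x 1) ^ 2 - (x 2) ^ 2 := Real.sq_sqrt hq.le
  have hUw : ∀ β, etaCoef β * Ubj x β = omegaBj x β := by
    intro β; simp [Ubj, omegaBj, mul_div_assoc]
  have hS : ∑ α, Ubj x α * omegaBj x α = -1 := by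
    simp [Fin.sum_univ_four, Ubj, omegaBj, etaCoef]
    field_simp
    linear_combination ht2
  have hsym : ∀ a b, gH x a b = gH x b a := by
    intro a b
    by_cases h : a = b
    · rw [h]
    · simp [gH, etaMat, h, Ne.symm h, mul_comm]
  have hP : ∀ b, ∑ α, Ubj x α * gH x α b = 0 := by
    intro b
    have h1 : ∀ α, Ubj x α * gH x α b
        = (if α = b then Ubj x α * etaCoef α else 0)
          + (Ubj x α * omegaBj x α) * omegaBj x b := by
      intro α
      by_cases h : α = b <;> simp [gH, etaMat, h] <;> ring
    rw [Finset.sum_congr rfl fun α _ => h1 α, Finset.sum_add_distrib, Finset.sum_ite_eq',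
      ← Finset.sum_mul, hS]
    simp only [Finset.mem_univ, if_true]
    linear_combination hUw b
  have hpdU : ∀ α β, pd α (fun y => Ubj y β) x
      = ((if β = α then 1 else 0) + Ubj x β * omegaBj x α) / tau x :=
    fun α β => pd_Ubj hq α β
  have hdiv : ∑ α, pd α (fun y => Ubj y α) x = 3 / tau x := by
    rw [Finset.sum_congr rfl fun α _ => hpdU α α]
    simp only [if_pos rfl]
    rw [← Finset.sum_div, Finset.sum_add_distrib, hS]
    norm_num
  have key : ∀ α, Ubj x α * pd α (fun y => gH y μ ν) x
        + pd μ (fun y => Ubj y α) x * gH x α ν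
        + pd ν (fun y => Ubj y α) x * gH x μ α
      = ((if μ = α then etaCoef μ * Ubj x α * omegaBj x ν else 0)
        + (if ν = α then etaCoef ν * Ubj x α * omegaBj x μ else 0)
        + (if μ = α then gH x α ν else 0)
        + (if ν = α then gH x μ α else 0)) / tau x
        + (2 * omegaBj x μ * omegaBj x ν / tau x) * (Ubj x α * omegaBj x α)
        + (omegaBj x μ / tau x) * (Ubj x α * gH x α ν)
        + (omegaBj x ν / tau x) * (Ubj x α * gH x μ α) := by
    intro α
    rw [pd_gH hq μ ν α, hpdU μ α, hpdU ν α]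
    rcases eq_or_ne μ α with h1 | h1 <;> rcases eq_or_ne ν α with h2 | h2
    · simp only [h1, h2, eq_self_iff_true, if_true]
      field_simp; ring
    · simp only [h1, h2, Ne.symm h2, eq_self_iff_true, if_true, if_false]
      field_simp; ring
    · simp only [h2, h1, Ne.symm h1, eq_self_iff_true, if_true, if_false]
      field_simp; ring
    · simp only [h1, Ne.symm h1, h2, Ne.symm h2, if_false]
      field_simp; ring
  rw [lieD, Finset.sum_congr rfl fun α _ => key α]
  rw [Finset.sum_add_distrib, Finset.sum_add_distrib, Finset.sum_add_distrib,
    ← Finset.sum_div, ← Finset.mul_sum, ← Finset.mul_sum, ← Finset.mul_sum]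
  have hsymsum : ∑ α, Ubj x α * gH x μ α = 0 := by
    rw [Finset.sum_congr rfl fun α _ => by rw [hsym μ α]]
    exact hP μ
  rw [hS, hP ν, hsymsum, hdiv]
  rw [Finset.sum_add_distrib, Finset.sum_add_distrib, Finset.sum_add_distrib]
  simp only [Finset.sum_ite_eq, Finset.mem_univ, if_true]
  rw [hUw μ, hUw ν]
  field_simp
  ring
end
end

section
/- Let Ω = { x ∈ ℝ⁴ : x₄ > √(x₁²+x₂²+x₃²) }, τ(x) = √(x₄² − x₁² − x₂² − x₃²), and U(x) = x / τ(x), with ω_μ = Σ_α η_{μα}U^α and g^H_{μν} = η_{μν} + ω_μ ω_ν. Then div U = 3/τ on Ω, and the divergence of the bulk-viscosity tensor B_{μν} = (div U)·g^H_{μν} is purely vertical: for every x ∈ Ω and every vector X ∈ ℝ⁴ with η(X, U(x)) = 0 one has Σ_ν ( Σ_{α,μ} η^{αμ} ∂_α B_{μν} )(x) · X^ν = 0 (indeed Σ_{α,μ} η^{αμ} ∂_α B_{μν} = (9/τ²)·ω_ν). -/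
open scoped BigOperators

noncomputable section

/-- The bulk-viscosity tensor `B = (div U)·g^H` of the flow `U = x/τ`. -/
def bulk (x : Fin 4 → ℝ) (μ ν : Fin 4) : ℝ :=
  (∑ α, pd α (fun y => Ubj y α) x) * gH x μ ν

namespace S11

def qf (x : Fin 4 → ℝ) : ℝ := x 3 ^ 2 - x 0 ^ 2 - x 1 ^ 2 - x 2 ^ 2

lemma qf_pos {x : Fin 4 → ℝ} (hx : x ∈ lightcone) : 0 < qf x := by
  have h0 : Real.sqrt (x 0 ^ 2 + x 1 ^ 2 + x 2 ^ 2) < x 3 := hx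
  have hx3 : 0 < x 3 := lt_of_le_of_lt (Real.sqrt_nonneg _) h0
  have h1 := (Real.sqrt_lt' hx3).mp h0
  unfold qf; linarith

lemma tau_sq {x : Fin 4 → ℝ} (hx : x ∈ lightcone) : tau x ^ 2 = qf x :=
  Real.sq_sqrt (qf_pos hx).le

lemma tau_pos {x : Fin 4 → ℝ} (hx : x ∈ lightcone) : 0 < tau x :=
  Real.sqrt_pos.mpr (qf_pos hx)

lemma isOpen_lightcone : IsOpen lightcone :=
  isOpen_lt (by fun_prop) (continuous_apply 3)

lemma diff_proj (ν : Fin 4) (x : Fin 4 → ℝ) :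
    DifferentiableAt ℝ (fun y : Fin 4 → ℝ => y ν) x :=
  (ContinuousLinearMap.proj (R := ℝ) (φ := fun _ : Fin 4 => ℝ) ν).differentiableAt

lemma pd_proj (μ ν : Fin 4) (x : Fin 4 → ℝ) :
    pd μ (fun y => y ν) x = if ν = μ then 1 else 0 := by
  have h : HasFDerivAt (fun y : Fin 4 → ℝ => y ν)
      (ContinuousLinearMap.proj (R := ℝ) (φ := fun _ : Fin 4 => ℝ) ν) x :=
    (ContinuousLinearMap.proj (R := ℝ) (φ := fun _ : Fin 4 => ℝ) ν).hasFDerivAt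
  rw [pd, h.fderiv]
  simp [Pi.single_apply]

lemma pd_mul {f g : (Fin 4 → ℝ) → ℝ} {x : Fin 4 → ℝ} (μ : Fin 4)
    (hf : DifferentiableAt ℝ f x) (hg : DifferentiableAt ℝ g x) :
    pd μ (fun y => f y * g y) x = pd μ f x * g x + f x * pd μ g x := by
  unfold pd
  rw [fderiv_fun_mul hf hg]
  simp only [ContinuousLinearMap.add_apply, ContinuousLinearMap.coe_smul', Pi.smul_apply,
    smul_eq_mul]
  ring

lemma pd_sub {f g : (Fin 4 → ℝ) → ℝ} {x : Fin 4 → ℝ} (μ : Fin 4)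
    (hf : DifferentiableAt ℝ f x) (hg : DifferentiableAt ℝ g x) :
    pd μ (fun y => f y - g y) x = pd μ f x - pd μ g x := by
  unfold pd
  rw [fderiv_fun_sub hf hg]
  simp

lemma pd_inv {g : (Fin 4 → ℝ) → ℝ} {x : Fin 4 → ℝ} (μ : Fin 4)
    (hg : DifferentiableAt ℝ g x) (hgx : g x ≠ 0) :
    pd μ (fun y => (g y)⁻¹) x = -pd μ g x / g x ^ 2 := by
  have h : HasFDerivAt (fun y => (g y)⁻¹) ((-(g x ^ 2)⁻¹) • fderiv ℝ g x) x :=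
    (hasDerivAt_inv hgx).comp_hasFDerivAt x hg.hasFDerivAt
  unfold pd
  rw [h.fderiv]
  simp only [ContinuousLinearMap.coe_smul', Pi.smul_apply, smul_eq_mul]
  ring

lemma diff_inv {g : (Fin 4 → ℝ) → ℝ} {x : Fin 4 → ℝ}
    (hg : DifferentiableAt ℝ g x) (hgx : g x ≠ 0) :
    DifferentiableAt ℝ (fun y => (g y)⁻¹) x :=
  ((hasDerivAt_inv hgx).comp_hasFDerivAt x hg.hasFDerivAt).differentiableAt

lemma pd_div {f g : (Fin 4 → ℝ) → ℝ} {x : Fin 4 → ℝ} (μ : Fin 4)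
    (hf : DifferentiableAt ℝ f x) (hg : DifferentiableAt ℝ g x) (hgx : g x ≠ 0) :
    pd μ (fun y => f y / g y) x
      = (pd μ f x * g x - f x * pd μ g x) / g x ^ 2 := by
  have he : (fun y => f y / g y) = fun y => f y * (g y)⁻¹ := by
    funext y; rw [div_eq_mul_inv]
  rw [he, pd_mul μ hf (diff_inv hg hgx), pd_inv μ hg hgx]
  field_simp
  ring

lemma diff_div {f g : (Fin 4 → ℝ) → ℝ} {x : Fin 4 → ℝ}
    (hf : DifferentiableAt ℝ f x) (hg : DifferentiableAt ℝ g x) (hgx : g x ≠ 0) :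
    DifferentiableAt ℝ (fun y => f y / g y) x := by
  have he : (fun y => f y / g y) = fun y => f y * (g y)⁻¹ :=
    funext fun y => div_eq_mul_inv _ _
  rw [he]; exact hf.mul (diff_inv hg hgx)

lemma pd_add {f g : (Fin 4 → ℝ) → ℝ} {x : Fin 4 → ℝ} (μ : Fin 4)
    (hf : DifferentiableAt ℝ f x) (hg : DifferentiableAt ℝ g x) :
    pd μ (fun y => f y + g y) x = pd μ f x + pd μ g x := by
  unfold pd
  rw [fderiv_fun_add hf hg]
  simp

lemma pd_const (μ : Fin 4) (x : Fin 4 → ℝ) (c : ℝ) : pd μ (fun _ => c) x = 0 := by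
  unfold pd; simp

lemma pd_const_mul {f : (Fin 4 → ℝ) → ℝ} {x : Fin 4 → ℝ} (μ : Fin 4) (c : ℝ)
    (hf : DifferentiableAt ℝ f x) :
    pd μ (fun y => c * f y) x = c * pd μ f x := by
  unfold pd; rw [fderiv_const_mul hf]; simp

lemma pd_sq (μ ν : Fin 4) (x : Fin 4 → ℝ) :
    pd μ (fun y => y ν ^ 2) x = if ν = μ then 2 * x ν else 0 := by
  have he : (fun y : Fin 4 → ℝ => y ν ^ 2) = fun y => y ν * y ν := by
    funext y; ring
  rw [he, pd_mul μ (diff_proj ν x) (diff_proj ν x), pd_proj]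
  split_ifs <;> ring

lemma diff_qf (x : Fin 4 → ℝ) : DifferentiableAt ℝ qf x := by
  unfold qf
  exact ((((diff_proj 3 x).pow 2).sub ((diff_proj 0 x).pow 2)).sub
    ((diff_proj 1 x).pow 2)).sub ((diff_proj 2 x).pow 2)

lemma pd_qf (μ : Fin 4) (x : Fin 4 → ℝ) : pd μ qf x = -2 * etaCoef μ * x μ := by
  have d0 := (diff_proj 0 x).pow 2
  have d1 := (diff_proj 1 x).pow 2
  have d2 := (diff_proj 2 x).pow 2
  have d3 := (diff_proj 3 x).pow 2
  have h1 : pd μ qf x = ((pd μ (fun y => y 3 ^ 2) x - pd μ (fun y => y 0 ^ 2) x)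
      - pd μ (fun y => y 1 ^ 2) x) - pd μ (fun y => y 2 ^ 2) x := by
    unfold qf
    rw [pd_sub (f := fun y => y 3 ^ 2 - y 0 ^ 2 - y 1 ^ 2) (g := fun y => y 2 ^ 2) μ ((d3.sub d0).sub d1) d2,
      pd_sub (f := fun y => y 3 ^ 2 - y 0 ^ 2) (g := fun y => y 1 ^ 2) μ (d3.sub d0) d1,
      pd_sub (f := fun y => y 3 ^ 2) (g := fun y => y 0 ^ 2) μ d3 d0]
  rw [h1, pd_sq, pd_sq, pd_sq, pd_sq]
  fin_cases μ <;> simp [etaCoef] <;> ring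

lemma hasFDerivAt_tau {x : Fin 4 → ℝ} (hx : x ∈ lightcone) :
    HasFDerivAt tau ((1 / (2 * Real.sqrt (qf x))) • fderiv ℝ qf x) x :=
  (diff_qf x).hasFDerivAt.sqrt (qf_pos hx).ne'

lemma diff_tau {x : Fin 4 → ℝ} (hx : x ∈ lightcone) : DifferentiableAt ℝ tau x :=
  (hasFDerivAt_tau hx).differentiableAt

lemma pd_tau {x : Fin 4 → ℝ} (hx : x ∈ lightcone) (μ : Fin 4) :
    pd μ tau x = -(etaCoef μ * x μ) / tau x := by
  have h := hasFDerivAt_tau hx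
  unfold pd
  rw [h.fderiv]
  simp only [ContinuousLinearMap.coe_smul', Pi.smul_apply, smul_eq_mul]
  rw [show (fderiv ℝ qf x) (Pi.single μ 1) = pd μ qf x from rfl, pd_qf]
  rw [show Real.sqrt (qf x) = tau x from rfl]
  have ht := (tau_pos hx).ne'
  field_simp

lemma pd_Ubj {x : Fin 4 → ℝ} (hx : x ∈ lightcone) (β μ : Fin 4) :
    pd β (fun y => Ubj y μ) x
      = ((if μ = β then 1 else 0) * tau x
          - x μ * (-(etaCoef β * x β) / tau x)) / tau x ^ 2 := by
  have he : (fun y => Ubj y μ) = fun y => y μ / tau y := rfl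
  rw [he, pd_div β (diff_proj μ x) (diff_tau hx) (tau_pos hx).ne', pd_proj, pd_tau hx]

lemma divU_eq {x : Fin 4 → ℝ} (hx : x ∈ lightcone) :
    (∑ μ, pd μ (fun y => Ubj y μ) x) = 3 / tau x := by
  rw [Fin.sum_univ_four, pd_Ubj hx 0 0, pd_Ubj hx 1 1, pd_Ubj hx 2 2, pd_Ubj hx 3 3]
  have ht := (tau_pos hx).ne'
  have h2 := tau_sq hx
  unfold qf at h2
  norm_num [etaCoef, show (0:Fin 4) ≠ 3 by decide, show (1:Fin 4) ≠ 3 by decide,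
    show (2:Fin 4) ≠ 3 by decide]
  field_simp
  linear_combination h2

lemma diff_omega {x : Fin 4 → ℝ} (hx : x ∈ lightcone) (μ : Fin 4) :
    DifferentiableAt ℝ (fun y => omegaBj y μ) x := by
  have he : (fun y => omegaBj y μ) = fun y => (etaCoef μ * y μ) / tau y := rfl
  rw [he]
  exact diff_div ((diff_proj μ x).const_mul _) (diff_tau hx) (tau_pos hx).ne'

lemma pd_omega {x : Fin 4 → ℝ} (hx : x ∈ lightcone) (β μ : Fin 4) :
    pd β (fun y => omegaBj y μ) x
      = (etaCoef μ * (if μ = β then 1 else 0) * tau x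
          - etaCoef μ * x μ * (-(etaCoef β * x β) / tau x)) / tau x ^ 2 := by
  have he : (fun y => omegaBj y μ) = fun y => (etaCoef μ * y μ) / tau y := rfl
  rw [he, pd_div β ((diff_proj μ x).const_mul _) (diff_tau hx) (tau_pos hx).ne',
    pd_const_mul β _ (diff_proj μ x), pd_proj, pd_tau hx]

set_option maxHeartbeats 1000000 in
lemma pd_3div {x : Fin 4 → ℝ} (hx : x ∈ lightcone) (β : Fin 4) :
    pd β (fun y => 3 / tau y) x = 3 * (etaCoef β * x β) / tau x ^ 3 := by
  rw [pd_div β (differentiableAt_const _) (diff_tau hx) (tau_pos hx).ne',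
    pd_const, pd_tau hx]
  have ht := (tau_pos hx).ne'
  field_simp
  ring

lemma etaCoef_sq (μ : Fin 4) : etaCoef μ ^ 2 = 1 := by
  unfold etaCoef; split_ifs <;> norm_num

lemma pd_bulk {x : Fin 4 → ℝ} (hx : x ∈ lightcone) (α β ν : Fin 4) :
    pd β (fun y => bulk y α ν) x = pd β (fun y => 3 / tau y * gH y α ν) x := by
  have hev : (fun y => bulk y α ν) =ᶠ[nhds x] fun y => 3 / tau y * gH y α ν := by
    filter_upwards [isOpen_lightcone.mem_nhds hx] with y hy
    simp only [bulk, divU_eq hy]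
  unfold pd
  rw [hev.fderiv_eq]

lemma pd_G {x : Fin 4 → ℝ} (hx : x ∈ lightcone) (α β ν : Fin 4) :
    pd β (fun y => 3 / tau y * gH y α ν) x
      = pd β (fun y => 3 / tau y) x * gH x α ν
        + (3 / tau x) * (pd β (fun y => omegaBj y α) x * omegaBj x ν
            + omegaBj x α * pd β (fun y => omegaBj y ν) x) := by
  have h3 : DifferentiableAt ℝ (fun y => 3 / tau y) x :=
    diff_div (differentiableAt_const _) (diff_tau hx) (tau_pos hx).ne'
  have hgd : DifferentiableAt ℝ (fun y => gH y α ν) x := by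
    have he : (fun y => gH y α ν) = fun y => etaMat α ν + omegaBj y α * omegaBj y ν := rfl
    rw [he]
    exact (differentiableAt_const _).add ((diff_omega hx α).mul (diff_omega hx ν))
  rw [pd_mul β h3 hgd]
  have he : (fun y => gH y α ν) = fun y => etaMat α ν + omegaBj y α * omegaBj y ν := rfl
  rw [he, pd_add (g := fun y => omegaBj y α * omegaBj y ν) β (differentiableAt_const _) ((diff_omega hx α).mul (diff_omega hx ν)),
    pd_const, pd_mul β (diff_omega hx α) (diff_omega hx ν)]
  ring

set_option maxHeartbeats 1600000 in
lemma key2 {x : Fin 4 → ℝ} (hx : x ∈ lightcone) (α ν : Fin 4) :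
    etaCoef α * pd α (fun y => bulk y α ν) x
      = 3 * x α * etaMat α ν / tau x ^ 3
        + 3 * etaCoef ν * x ν / tau x ^ 3
        + 3 * etaCoef ν * (if ν = α then 1 else 0) * x α / tau x ^ 3
        + 9 * etaCoef α * etaCoef ν * x α ^ 2 * x ν / tau x ^ 5 := by
  rw [pd_bulk hx α α ν, pd_G hx α α ν, pd_3div hx α, pd_omega hx α α, pd_omega hx α ν]
  rw [if_pos rfl]
  have ht := (tau_pos hx).ne'
  have he : gH x α ν = etaMat α ν + omegaBj x α * omegaBj x ν := rfl
  rw [he]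
  simp only [omegaBj]
  have hm : etaMat α ν = if α = ν then etaCoef α else 0 := rfl
  rw [hm]
  by_cases hν : ν = α
  · subst hν
    by_cases h3 : ν = 3
    · subst h3
      norm_num [etaCoef]
      field_simp
      ring
    · simp only [etaCoef, h3, if_true, if_false, reduceIte, eq_self_iff_true]
      field_simp
      ring
  · have hαν : ¬ α = ν := fun h => hν h.symm
    by_cases hα : α = 3
    · subst hα
      have h3 : ¬ ν = 3 := hν
      have h3ν : ¬ (3 : Fin 4) = ν := fun h => hν h.symm
      simp only [etaCoef, h3, h3ν, hν, hαν, if_true, if_false, reduceIte,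
        eq_self_iff_true]
      field_simp
      ring
    · by_cases h3 : ν = 3
      · subst h3
        have h3α : ¬ (3 : Fin 4) = α := fun h => hα h.symm
        simp only [etaCoef, hα, hν, hαν, h3α, if_true, if_false, reduceIte,
          eq_self_iff_true]
        field_simp
        ring
      · simp only [etaCoef, hα, h3, hν, hαν, if_true, if_false, reduceIte,
          eq_self_iff_true]
        field_simp
        ring

set_option maxHeartbeats 1600000 in
lemma stmt2 {x : Fin 4 → ℝ} (hx : x ∈ lightcone) (ν : Fin 4) :
    (∑ α, etaCoef α * pd α (fun y => bulk y α ν) x) = 9 / tau x ^ 2 * omegaBj x ν := by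
  rw [Fin.sum_univ_four, key2 hx 0 ν, key2 hx 1 ν, key2 hx 2 ν, key2 hx 3 ν]
  have ht := (tau_pos hx).ne'
  have h2 := tau_sq hx
  unfold qf at h2
  simp only [omegaBj]
  have hcase : ν = 0 ∨ ν = 1 ∨ ν = 2 ∨ ν = 3 := by omega
  rcases hcase with rfl | rfl | rfl | rfl
  · simp only [etaCoef, etaMat, Fin.isValue, show ((0:Fin 4) = 3) = False by simp,
      show ((1:Fin 4) = 3) = False by simp, show ((2:Fin 4) = 3) = False by simp,
      show ((3:Fin 4) = 0) = False by simp, show ((3:Fin 4) = 1) = False by simp,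
      show ((3:Fin 4) = 2) = False by simp, show ((0:Fin 4) = 1) = False by simp,
      show ((0:Fin 4) = 2) = False by simp, show ((1:Fin 4) = 0) = False by simp,
      show ((1:Fin 4) = 2) = False by simp, show ((2:Fin 4) = 0) = False by simp,
      show ((2:Fin 4) = 1) = False by simp, if_true, if_false, reduceIte,
      eq_self_iff_true]
    field_simp
    linear_combination (9 * x 0) * h2
  · simp only [etaCoef, etaMat, Fin.isValue, show ((0:Fin 4) = 3) = False by simp,
      show ((1:Fin 4) = 3) = False by simp, show ((2:Fin 4) = 3) = False by simp,
      show ((3:Fin 4) = 0) = False by simp, show ((3:Fin 4) = 1) = False by simp,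
      show ((3:Fin 4) = 2) = False by simp, show ((0:Fin 4) = 1) = False by simp,
      show ((0:Fin 4) = 2) = False by simp, show ((1:Fin 4) = 0) = False by simp,
      show ((1:Fin 4) = 2) = False by simp, show ((2:Fin 4) = 0) = False by simp,
      show ((2:Fin 4) = 1) = False by simp, if_true, if_false, reduceIte,
      eq_self_iff_true]
    field_simp
    linear_combination (9 * x 1) * h2
  · simp only [etaCoef, etaMat, Fin.isValue, show ((0:Fin 4) = 3) = False by simp,
      show ((1:Fin 4) = 3) = False by simp, show ((2:Fin 4) = 3) = False by simp,
      show ((3:Fin 4) = 0) = False by simp, show ((3:Fin 4) = 1) = False by simp,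
      show ((3:Fin 4) = 2) = False by simp, show ((0:Fin 4) = 1) = False by simp,
      show ((0:Fin 4) = 2) = False by simp, show ((1:Fin 4) = 0) = False by simp,
      show ((1:Fin 4) = 2) = False by simp, show ((2:Fin 4) = 0) = False by simp,
      show ((2:Fin 4) = 1) = False by simp, if_true, if_false, reduceIte,
      eq_self_iff_true]
    field_simp
    linear_combination (9 * x 2) * h2
  · simp only [etaCoef, etaMat, Fin.isValue, show ((0:Fin 4) = 3) = False by simp,
      show ((1:Fin 4) = 3) = False by simp, show ((2:Fin 4) = 3) = False by simp,
      show ((3:Fin 4) = 0) = False by simp, show ((3:Fin 4) = 1) = False by simp,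
      show ((3:Fin 4) = 2) = False by simp, show ((0:Fin 4) = 1) = False by simp,
      show ((0:Fin 4) = 2) = False by simp, show ((1:Fin 4) = 0) = False by simp,
      show ((1:Fin 4) = 2) = False by simp, show ((2:Fin 4) = 0) = False by simp,
      show ((2:Fin 4) = 1) = False by simp, if_true, if_false, reduceIte,
      eq_self_iff_true]
    field_simp
    linear_combination (-9 * x 3) * h2

end S11

/-- `div U = 3/τ`, and the divergence of the bulk-viscosity
tensor `B = (div U)·g^H` equals `(9/τ²)·ω`, hence is purely vertical. -/
theorem statement11 :
    ∀ x ∈ lightcone,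
      (∑ μ, pd μ (fun y => Ubj y μ) x) = 3 / tau x ∧
      (∀ ν : Fin 4,
        (∑ α, etaCoef α * pd α (fun y => bulk y α ν) x)
          = (9 / tau x ^ 2) * omegaBj x ν) ∧
      (∀ X : Fin 4 → ℝ, eta X (Ubj x) = 0 →
        ∑ ν, (∑ α, etaCoef α * pd α (fun y => bulk y α ν) x) * X ν = 0) := by
  intro x hx
  refine ⟨S11.divU_eq hx, fun ν => S11.stmt2 hx ν, ?_⟩
  intro X hX
  rw [Fin.sum_univ_four, S11.stmt2 hx 0, S11.stmt2 hx 1, S11.stmt2 hx 2, S11.stmt2 hx 3]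
  unfold eta Ubj at hX
  rw [Fin.sum_univ_four] at hX
  have ht := (S11.tau_pos hx).ne'
  simp only [omegaBj, etaCoef, show ((0:Fin 4) = 3) = False by simp,
    show ((1:Fin 4) = 3) = False by simp, show ((2:Fin 4) = 3) = False by simp,
    if_true, if_false, reduceIte, eq_self_iff_true] at hX ⊢
  field_simp at hX ⊢
  linear_combination 9 * hX
end
end

section
/- Fix q > 0 and let Ω = { x ∈ ℝ⁴ : x₁² + x₂² < 1/q² }. Define U(x) = ( −q x₂, q x₁, 0, 1 ) / √(1 − q²(x₁²+x₂²)), ρ(x) = 1 − q²(x₁²+x₂²) and p = −ρ/3. Then η(U,U) = −1 and Σ_μ ∂_μ U^μ = 0 on Ω, and the triple (U, ρ, p) satisfies both the relativistic Euler equations and the energy conservation equation along flow lines on Ω. (Skew projection's flow, Example 3.4.) -/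
open scoped BigOperators

noncomputable section

/-- The open solid cylinder `x₁² + x₂² < 1/q²`. -/
def cylSet (q : ℝ) : Set (Fin 4 → ℝ) := {x | (x 0) ^ 2 + (x 1) ^ 2 < 1 / q ^ 2}

/-- The skew projection flow
`U(x) = (−q x₂, q x₁, 0, 1)/√(1 − q²(x₁² + x₂²))`. -/
def Uskew (q : ℝ) (x : Fin 4 → ℝ) : Fin 4 → ℝ := fun ν =>
  (if ν = 0 then -q * x 1 else if ν = 1 then q * x 0 else if ν = 3 then 1 else 0) /
    Real.sqrt (1 - q ^ 2 * ((x 0) ^ 2 + (x 1) ^ 2))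

/-- `ρ(x) = 1 − q²(x₁² + x₂²)`. -/
def rhoSkew (q : ℝ) (x : Fin 4 → ℝ) : ℝ := 1 - q ^ 2 * ((x 0) ^ 2 + (x 1) ^ 2)

namespace Stmt14Aux

open ContinuousLinearMap

lemma fin4 : ∀ ν : Fin 4, ν = 0 ∨ ν = 1 ∨ ν = 2 ∨ ν = 3 := by decide

lemma hasG (q : ℝ) (x : Fin 4 → ℝ) :
    HasFDerivAt (fun y : Fin 4 → ℝ => 1 - q ^ 2 * (y 0 ^ 2 + y 1 ^ 2))
      (-(q ^ 2 •
        ((x 0 • (proj 0 : (Fin 4 → ℝ) →L[ℝ] ℝ) + x 0 • (proj 0 : (Fin 4 → ℝ) →L[ℝ] ℝ)) +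
         (x 1 • (proj 1 : (Fin 4 → ℝ) →L[ℝ] ℝ) + x 1 • (proj 1 : (Fin 4 → ℝ) →L[ℝ] ℝ))))) x := by
  have h0 : HasFDerivAt (fun y : Fin 4 → ℝ => y 0) (proj 0 : (Fin 4 → ℝ) →L[ℝ] ℝ) x :=
    (proj 0 : (Fin 4 → ℝ) →L[ℝ] ℝ).hasFDerivAt
  have h1 : HasFDerivAt (fun y : Fin 4 → ℝ => y 1) (proj 1 : (Fin 4 → ℝ) →L[ℝ] ℝ) x :=
    (proj 1 : (Fin 4 → ℝ) →L[ℝ] ℝ).hasFDerivAt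
  have hsq0 : HasFDerivAt (fun y : Fin 4 → ℝ => y 0 ^ 2)
      (x 0 • (proj 0 : (Fin 4 → ℝ) →L[ℝ] ℝ) + x 0 • (proj 0 : (Fin 4 → ℝ) →L[ℝ] ℝ)) x := by
    simpa [pow_two, Pi.mul_def] using h0.mul h0
  have hsq1 : HasFDerivAt (fun y : Fin 4 → ℝ => y 1 ^ 2)
      (x 1 • (proj 1 : (Fin 4 → ℝ) →L[ℝ] ℝ) + x 1 • (proj 1 : (Fin 4 → ℝ) →L[ℝ] ℝ)) x := by
    simpa [pow_two, Pi.mul_def] using h1.mul h1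
  exact ((hsq0.add hsq1).const_mul (q ^ 2)).const_sub 1

lemma pdRho (q : ℝ) (x : Fin 4 → ℝ) (μ : Fin 4) :
    pd μ (rhoSkew q) x
      = -(q ^ 2 * (2 * (if μ = 0 then x 0 else if μ = 1 then x 1 else 0))) := by
  have h : rhoSkew q = fun y : Fin 4 → ℝ => 1 - q ^ 2 * (y 0 ^ 2 + y 1 ^ 2) := rfl
  rw [pd, h, (hasG q x).fderiv]
  rcases fin4 μ with rfl | rfl | rfl | rfl <;>
    simp [Pi.single_apply] <;> ring

lemma pdP (q : ℝ) (x : Fin 4 → ℝ) (μ : Fin 4) :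
    pd μ (fun y => -(rhoSkew q y) / 3) x
      = 2 * q ^ 2 * (if μ = 0 then x 0 else if μ = 1 then x 1 else 0) / 3 := by
  have h : (fun y => -(rhoSkew q y) / 3)
      = fun y : Fin 4 → ℝ => (-1/3 : ℝ) * (1 - q ^ 2 * (y 0 ^ 2 + y 1 ^ 2)) := by
    funext y; simp [rhoSkew]; ring
  rw [pd, h, ((hasG q x).const_mul (-1/3 : ℝ)).fderiv]
  rcases fin4 μ with rfl | rfl | rfl | rfl <;>
    simp [Pi.single_apply] <;> ring

lemma pdU (q : ℝ) (x : Fin 4 → ℝ) (hs : 0 < 1 - q ^ 2 * (x 0 ^ 2 + x 1 ^ 2)) (μ ν : Fin 4) :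
    pd μ (fun y => Uskew q y ν) x =
      (if ν = 0 ∧ μ = 1 then -q else if ν = 1 ∧ μ = 0 then q else 0)
          / Real.sqrt (1 - q ^ 2 * (x 0 ^ 2 + x 1 ^ 2))
        + (if ν = 0 then -q * x 1 else if ν = 1 then q * x 0 else if ν = 3 then 1 else 0)
            * (q ^ 2 * (if μ = 0 then x 0 else if μ = 1 then x 1 else 0))
            / (Real.sqrt (1 - q ^ 2 * (x 0 ^ 2 + x 1 ^ 2)) * (1 - q ^ 2 * (x 0 ^ 2 + x 1 ^ 2))) := by
  have hr : 0 < Real.sqrt (1 - q ^ 2 * (x 0 ^ 2 + x 1 ^ 2)) := Real.sqrt_pos.mpr hs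
  have hr2 : Real.sqrt (1 - q ^ 2 * (x 0 ^ 2 + x 1 ^ 2)) ^ 2
      = 1 - q ^ 2 * (x 0 ^ 2 + x 1 ^ 2) := Real.sq_sqrt hs.le
  have hG := hasG q x
  have hsqrt := (Real.hasDerivAt_sqrt hs.ne').comp_hasFDerivAt x hG
  have hinv := (hasDerivAt_inv hr.ne').comp_hasFDerivAt x hsqrt
  have h0 : HasFDerivAt (fun y : Fin 4 → ℝ => y 0) (proj 0 : (Fin 4 → ℝ) →L[ℝ] ℝ) x :=
    (proj 0 : (Fin 4 → ℝ) →L[ℝ] ℝ).hasFDerivAt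
  have h1 : HasFDerivAt (fun y : Fin 4 → ℝ => y 1) (proj 1 : (Fin 4 → ℝ) →L[ℝ] ℝ) x :=
    (proj 1 : (Fin 4 → ℝ) →L[ℝ] ℝ).hasFDerivAt
  rcases fin4 ν with rfl | rfl | rfl | rfl
  · -- ν = 0
    have hfun : (fun y => Uskew q y (0 : Fin 4))
        = fun y : Fin 4 → ℝ => -q * y 1 / Real.sqrt (1 - q ^ 2 * (y 0 ^ 2 + y 1 ^ 2)) := by
      funext y; simp [Uskew]
    have hmul := (h1.const_mul (-q)).mul hinv
    simp only [Function.comp_def, Pi.mul_def, ← div_eq_mul_inv] at hmul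
    rw [pd, hfun, hmul.fderiv]
    simp only [ContinuousLinearMap.add_apply, ContinuousLinearMap.smul_apply,
      ContinuousLinearMap.neg_apply, proj_apply, smul_eq_mul]
    rcases fin4 μ with rfl | rfl | rfl | rfl <;>
      simp [Pi.single_apply] <;>
      set r := Real.sqrt (1 - q ^ 2 * (x 0 ^ 2 + x 1 ^ 2)) with hrdef <;>
      (try rw [← hr2]) <;> field_simp <;> ring
  · -- ν = 1
    have hfun : (fun y => Uskew q y (1 : Fin 4))
        = fun y : Fin 4 → ℝ => q * y 0 / Real.sqrt (1 - q ^ 2 * (y 0 ^ 2 + y 1 ^ 2)) := by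
      funext y; simp [Uskew]
    have hmul := (h0.const_mul q).mul hinv
    simp only [Function.comp_def, Pi.mul_def, ← div_eq_mul_inv] at hmul
    rw [pd, hfun, hmul.fderiv]
    simp only [ContinuousLinearMap.add_apply, ContinuousLinearMap.smul_apply,
      ContinuousLinearMap.neg_apply, proj_apply, smul_eq_mul]
    rcases fin4 μ with rfl | rfl | rfl | rfl <;>
      simp [Pi.single_apply] <;>
      set r := Real.sqrt (1 - q ^ 2 * (x 0 ^ 2 + x 1 ^ 2)) with hrdef <;>
      (try rw [← hr2]) <;> field_simp <;> ring
  · -- ν = 2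
    have hfun : (fun y => Uskew q y (2 : Fin 4)) = fun _ : Fin 4 → ℝ => (0 : ℝ) := by
      funext y; simp [Uskew]
    rw [pd, hfun]
    simp
  · -- ν = 3
    have hfun : (fun y => Uskew q y (3 : Fin 4))
        = fun y : Fin 4 → ℝ => 1 / Real.sqrt (1 - q ^ 2 * (y 0 ^ 2 + y 1 ^ 2)) := by
      funext y; simp [Uskew]
    have hmul := (hasFDerivAt_const (1 : ℝ) x).mul hinv
    simp only [Function.comp_def, Pi.mul_def, ← div_eq_mul_inv] at hmul
    rw [pd, hfun, hmul.fderiv]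
    simp only [ContinuousLinearMap.add_apply, ContinuousLinearMap.smul_apply,
      ContinuousLinearMap.neg_apply, proj_apply, smul_eq_mul]
    rcases fin4 μ with rfl | rfl | rfl | rfl <;>
      simp [Pi.single_apply] <;>
      set r := Real.sqrt (1 - q ^ 2 * (x 0 ^ 2 + x 1 ^ 2)) with hrdef <;>
      (try rw [← hr2]) <;> field_simp <;> ring

lemma hs_of_mem (q : ℝ) (hq : 0 < q) (x : Fin 4 → ℝ) (hx : x ∈ cylSet q) :
    0 < 1 - q ^ 2 * (x 0 ^ 2 + x 1 ^ 2) := by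
  have hx' : x 0 ^ 2 + x 1 ^ 2 < 1 / q ^ 2 := hx
  have hq2 : (0 : ℝ) < q ^ 2 := by positivity
  have h := mul_lt_mul_of_pos_left hx' hq2
  rw [mul_one_div, div_self hq2.ne'] at h
  linarith

end Stmt14Aux

/-- the skew projection's flow with `ρ = 1 − q²(x₁²+x₂²)` and
`p = −ρ/3` is a unit, divergence-free perfect fluid flow solving the
relativistic Euler equations and the energy conservation equation. -/
theorem statement14 (q : ℝ) (hq : 0 < q) :
    (∀ x ∈ cylSet q, eta (Uskew q x) (Uskew q x) = -1) ∧
    (∀ x ∈ cylSet q, ∑ μ, pd μ (fun y => Uskew q y μ) x = 0) ∧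
    EulerEqs (cylSet q) (Uskew q) (rhoSkew q) (fun x => -(rhoSkew q x) / 3) ∧
    EnergyCons (cylSet q) (Uskew q) (rhoSkew q) (fun x => -(rhoSkew q x) / 3) := by
  refine ⟨?_, ?_, ?_, ?_⟩
  · -- eta
    intro x hx
    have hs := Stmt14Aux.hs_of_mem q hq x hx
    have hr : 0 < Real.sqrt (1 - q ^ 2 * (x 0 ^ 2 + x 1 ^ 2)) := Real.sqrt_pos.mpr hs
    have hr2 : Real.sqrt (1 - q ^ 2 * (x 0 ^ 2 + x 1 ^ 2)) ^ 2
        = 1 - q ^ 2 * (x 0 ^ 2 + x 1 ^ 2) := Real.sq_sqrt hs.le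
    simp [eta, Fin.sum_univ_four, etaCoef, Uskew]
    set r := Real.sqrt (1 - q ^ 2 * (x 0 ^ 2 + x 1 ^ 2)) with hrdef
    field_simp
    linear_combination hr2
  · -- divergence
    intro x hx
    have hs := Stmt14Aux.hs_of_mem q hq x hx
    have hr : 0 < Real.sqrt (1 - q ^ 2 * (x 0 ^ 2 + x 1 ^ 2)) := Real.sqrt_pos.mpr hs
    rw [Fin.sum_univ_four, Stmt14Aux.pdU q x hs 0 0, Stmt14Aux.pdU q x hs 1 1,
      Stmt14Aux.pdU q x hs 2 2, Stmt14Aux.pdU q x hs 3 3]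
    simp
    set r := Real.sqrt (1 - q ^ 2 * (x 0 ^ 2 + x 1 ^ 2)) with hrdef
    field_simp
    ring
  · -- Euler
    intro x hx ν
    have hs := Stmt14Aux.hs_of_mem q hq x hx
    have hr : 0 < Real.sqrt (1 - q ^ 2 * (x 0 ^ 2 + x 1 ^ 2)) := Real.sqrt_pos.mpr hs
    have hr2 : Real.sqrt (1 - q ^ 2 * (x 0 ^ 2 + x 1 ^ 2)) ^ 2
        = 1 - q ^ 2 * (x 0 ^ 2 + x 1 ^ 2) := Real.sq_sqrt hs.le
    rcases Stmt14Aux.fin4 ν with rfl | rfl | rfl | rfl <;>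
    · rw [show ∀ v w, eta v w = ∑ μ, etaCoef μ * v μ * w μ from fun _ _ => rfl]
      simp only [mgrad, Fin.sum_univ_four]
      rw [Stmt14Aux.pdU q x hs 0, Stmt14Aux.pdU q x hs 1, Stmt14Aux.pdU q x hs 2,
        Stmt14Aux.pdU q x hs 3, Stmt14Aux.pdP q x 0, Stmt14Aux.pdP q x 1,
        Stmt14Aux.pdP q x 2, Stmt14Aux.pdP q x 3]
      try simp [Uskew, rhoSkew, etaCoef]
      try set r := Real.sqrt (1 - q ^ 2 * (x 0 ^ 2 + x 1 ^ 2)) with hrdef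
      try rw [← hr2]
      try field_simp
      try first
        | ring1
        | linear_combination (-(27 : ℝ)) * r ^ 10 * q ^ 2 * x 0 * hr2
        | linear_combination (-(27 : ℝ)) * r ^ 10 * q ^ 2 * x 1 * hr2
        | linear_combination (-q ^ 2 * x 0 * r ^ 2) * hr2
        | linear_combination (-q ^ 2 * x 1 * r ^ 2) * hr2
  · -- energy
    intro x hx
    have hs := Stmt14Aux.hs_of_mem q hq x hx
    have hr : 0 < Real.sqrt (1 - q ^ 2 * (x 0 ^ 2 + x 1 ^ 2)) := Real.sqrt_pos.mpr hs
    have hr2 : Real.sqrt (1 - q ^ 2 * (x 0 ^ 2 + x 1 ^ 2)) ^ 2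
        = 1 - q ^ 2 * (x 0 ^ 2 + x 1 ^ 2) := Real.sq_sqrt hs.le
    simp only [Fin.sum_univ_four]
    rw [Stmt14Aux.pdU q x hs 0 0, Stmt14Aux.pdU q x hs 1 1,
      Stmt14Aux.pdU q x hs 2 2, Stmt14Aux.pdU q x hs 3 3,
      Stmt14Aux.pdRho q x 0, Stmt14Aux.pdRho q x 1,
      Stmt14Aux.pdRho q x 2, Stmt14Aux.pdRho q x 3]
    simp [Uskew, rhoSkew]
    set r := Real.sqrt (1 - q ^ 2 * (x 0 ^ 2 + x 1 ^ 2)) with hrdef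
    rw [← hr2]
    field_simp
    ring
end
end

section
/- Let Ω ⊆ ℝ⁴ be open, φ : Ω → ℝ³ smooth, and U : Ω → ℝ⁴ smooth with η(U,U) = −1 and Σ_α U^α ∂_α φ^a = 0 for a = 1,2,3. Set ω_μ = Σ_α η_{μα}U^α and g^H_{μν} = η_{μν} + ω_μ ω_ν, and suppose φ is horizontally conformal: there is a function λ : Ω → (0,∞) with Σ_{a=1}^{3} ∂_μ φ^a ∂_ν φ^a = λ² · g^H_{μν} on Ω for all μ, ν. Then U is shear-free: (ℒ_U g^H)_{μν} = (2/3)·(Σ_α ∂_α U^α)·g^H_{μν} on Ω for all μ, ν. -/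
open scoped BigOperators

noncomputable section

/-- The pullback `φ*h` of the Euclidean metric of `ℝ³`. -/
def pullb (φ : (Fin 4 → ℝ) → Fin 3 → ℝ) (x : Fin 4 → ℝ) (μ ν : Fin 4) : ℝ :=
  ∑ a, pd μ (fun y => φ y a) x * pd ν (fun y => φ y a) x

/-- The horizontal part `g^H = η + ω ⊗ ω` of the Minkowski metric determined
by the unit timelike vector field `U`, where `ω_μ = Σ_α η_{μα} U^α`. -/
def gHU (U : (Fin 4 → ℝ) → Fin 4 → ℝ) (x : Fin 4 → ℝ) (μ ν : Fin 4) : ℝ :=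
  etaMat μ ν + (etaCoef μ * U x μ) * (etaCoef ν * U x ν)

lemma pd_eventually_eq {f g : (Fin 4 → ℝ) → ℝ} {x : Fin 4 → ℝ}
    (h : f =ᶠ[nhds x] g) (μ : Fin 4) : pd μ f x = pd μ g x := by
  unfold pd; rw [h.fderiv_eq]

lemma pd_eventually_const {f : (Fin 4 → ℝ) → ℝ} {x : Fin 4 → ℝ} {c : ℝ}
    (h : f =ᶠ[nhds x] fun _ => c) (μ : Fin 4) : pd μ f x = 0 := by
  unfold pd; rw [h.fderiv_eq, fderiv_fun_const]; simp

lemma pd_mul {f g : (Fin 4 → ℝ) → ℝ} {x : Fin 4 → ℝ} (hf : DifferentiableAt ℝ f x)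
    (hg : DifferentiableAt ℝ g x) (μ : Fin 4) :
    pd μ (fun y => f y * g y) x = pd μ f x * g x + f x * pd μ g x := by
  unfold pd; rw [fderiv_fun_mul hf hg]; simp; ring

lemma pd_sum {ι : Type*} (s : Finset ι) (F : ι → (Fin 4 → ℝ) → ℝ) {x : Fin 4 → ℝ}
    (h : ∀ i ∈ s, DifferentiableAt ℝ (F i) x) (μ : Fin 4) :
    pd μ (fun y => ∑ i ∈ s, F i y) x = ∑ i ∈ s, pd μ (F i) x := by
  unfold pd; rw [fderiv_fun_sum h]; simp

lemma pd_const_add {f : (Fin 4 → ℝ) → ℝ} {x : Fin 4 → ℝ} (c : ℝ) (μ : Fin 4) :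
    pd μ (fun y => c + f y) x = pd μ f x := by
  unfold pd; rw [fderiv_const_add]

lemma pd_const_mul {f : (Fin 4 → ℝ) → ℝ} {x : Fin 4 → ℝ}
    (hf : DifferentiableAt ℝ f x) (c : ℝ) (μ : Fin 4) :
    pd μ (fun y => c * f y) x = c * pd μ f x := by
  unfold pd; rw [fderiv_const_mul hf]; simp

lemma pd_differentiableAt {f : (Fin 4 → ℝ) → ℝ} {x : Fin 4 → ℝ}
    (hf : ContDiffAt ℝ (⊤ : ℕ∞) f x) (μ : Fin 4) :
    DifferentiableAt ℝ (fun y => pd μ f y) x := by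
  have h1 : ContDiffAt ℝ (⊤ : ℕ∞) (fderiv ℝ f) x := hf.fderiv_right (by exact_mod_cast le_top)
  have h2 : DifferentiableAt ℝ (fderiv ℝ f) x := h1.differentiableAt (by simp)
  exact (ContinuousLinearMap.apply ℝ ℝ (Pi.single μ 1)).differentiableAt.comp x h2

lemma pd_pd {f : (Fin 4 → ℝ) → ℝ} {x : Fin 4 → ℝ}
    (hf : ContDiffAt ℝ (⊤ : ℕ∞) f x) (α μ : Fin 4) :
    pd α (fun y => pd μ f y) x = fderiv ℝ (fderiv ℝ f) x (Pi.single α 1) (Pi.single μ 1) := by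
  have h1 : ContDiffAt ℝ (⊤ : ℕ∞) (fderiv ℝ f) x := hf.fderiv_right (by exact_mod_cast le_top)
  have h2 : DifferentiableAt ℝ (fderiv ℝ f) x := h1.differentiableAt (by simp)
  have : pd α (fun y => pd μ f y) x
      = fderiv ℝ (fun y => (fderiv ℝ f y) ((Pi.single μ 1 : Fin 4 → ℝ))) x (Pi.single α 1) := rfl
  rw [this, fderiv_clm_apply h2 (differentiableAt_const (Pi.single μ 1 : Fin 4 → ℝ))]
  simp

lemma pd_comm {f : (Fin 4 → ℝ) → ℝ} {x : Fin 4 → ℝ}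
    (hf : ContDiffAt ℝ (⊤ : ℕ∞) f x) (α μ : Fin 4) :
    pd α (fun y => pd μ f y) x = pd μ (fun y => pd α f y) x := by
  rw [pd_pd hf, pd_pd hf]
  have h2 : (2 : WithTop ℕ∞) ≤ ((⊤ : ℕ∞) : WithTop ℕ∞) := by
    simpa using WithTop.coe_le_coe.mpr (le_top : (2 : ℕ∞) ≤ ⊤)
  exact (hf.isSymmSndFDerivAt (by rw [minSmoothness_of_isRCLikeNormedField]; exact h2)).eq _ _

/-- trace-recovered conformal factor squared -/
def Lfun (φ : (Fin 4 → ℝ) → Fin 3 → ℝ) : (Fin 4 → ℝ) → ℝ :=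
  fun y => (1/3 : ℝ) * ∑ κ, etaCoef κ * pullb φ y κ κ

/-- a horizontally conformal submersion with unit timelike
vertical vector field `U` has shear-free `U`: `ℒ_U g^H = (2/3)(div U)·g^H`. -/
theorem statement18 (Ω : Set (Fin 4 → ℝ)) (hΩ : IsOpen Ω)
    (φ : (Fin 4 → ℝ) → Fin 3 → ℝ) (U : (Fin 4 → ℝ) → Fin 4 → ℝ)
    (hφ : ContDiffOn ℝ (⊤ : ℕ∞) φ Ω) (hUsm : ContDiffOn ℝ (⊤ : ℕ∞) U Ω)
    (hUnit : ∀ x ∈ Ω, eta (U x) (U x) = -1)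
    (hvert : ∀ x ∈ Ω, ∀ a : Fin 3, ∑ α, U x α * pd α (fun y => φ y a) x = 0)
    (lam : (Fin 4 → ℝ) → ℝ) (hlam : ∀ x ∈ Ω, 0 < lam x)
    (hconf : ∀ x ∈ Ω, ∀ μ ν : Fin 4,
      pullb φ x μ ν = lam x ^ 2 * gHU U x μ ν) :
    ∀ x ∈ Ω, ∀ μ ν : Fin 4,
      lieD U (gHU U) x μ ν
        = (2 / 3) * (∑ α, pd α (fun y => U y α) x) * gHU U x μ ν := by
  intro x hx
  have hmem : Ω ∈ nhds x := hΩ.mem_nhds hx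
  have hφx : ContDiffAt ℝ (⊤ : ℕ∞) φ x := hφ.contDiffAt hmem
  have hUx : ContDiffAt ℝ (⊤ : ℕ∞) U x := hUsm.contDiffAt hmem
  have hφa : ∀ a, ContDiffAt ℝ (⊤ : ℕ∞) (fun y => φ y a) x := fun a => contDiffAt_pi.mp hφx a
  have hUa : ∀ α, ContDiffAt ℝ (⊤ : ℕ∞) (fun y => U y α) x := fun α => contDiffAt_pi.mp hUx α
  have hdU : ∀ α, DifferentiableAt ℝ (fun y => U y α) x := by
    intro α
    exact (hUa α).differentiableAt (by simp)
  have hdφpd : ∀ (μ' : Fin 4) (a : Fin 3),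
      DifferentiableAt ℝ (fun y => pd μ' (fun z => φ z a) y) x :=
    fun μ' a => pd_differentiableAt (hφa a) μ'
  -- (1) pd of eta(U,U) is zero
  have hEU : ∀ α : Fin 4,
      ∑ κ, ((etaCoef κ * pd α (fun y => U y κ) x) * U x κ
            + (etaCoef κ * U x κ) * pd α (fun y => U y κ) x) = 0 := by
    intro α
    have hev : (fun y => eta (U y) (U y)) =ᶠ[nhds x] fun _ => (-1 : ℝ) :=
      Filter.eventuallyEq_of_mem hmem (fun y hy => hUnit y hy)
    have h0 : pd α (fun y => eta (U y) (U y)) x = 0 := pd_eventually_const hev α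
    have h1 : pd α (fun y => eta (U y) (U y)) x
        = pd α (fun y => ∑ κ, etaCoef κ * U y κ * U y κ) x := rfl
    rw [h1, pd_sum _ (fun κ y => etaCoef κ * U y κ * U y κ) (fun κ _ => ((hdU κ).const_mul (etaCoef κ)).mul (hdU κ))] at h0
    rw [← h0]
    refine Finset.sum_congr rfl (fun κ _ => ?_)
    rw [pd_mul ((hdU κ).const_mul (etaCoef κ)) (hdU κ), pd_const_mul (hdU κ)]
  -- (2) differentiated verticality with symmetrized second derivatives
  have hA : ∀ (μ' : Fin 4) (a : Fin 3),
      ∑ α, (pd μ' (fun y => U y α) x * pd α (fun z => φ z a) x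
            + U x α * pd α (fun y => pd μ' (fun z => φ z a) y) x) = 0 := by
    intro μ' a
    have hev : (fun y => ∑ α, U y α * pd α (fun z => φ z a) y) =ᶠ[nhds x] fun _ => (0 : ℝ) :=
      Filter.eventuallyEq_of_mem hmem (fun y hy => hvert y hy a)
    have h0 : pd μ' (fun y => ∑ α, U y α * pd α (fun z => φ z a) y) x = 0 :=
      pd_eventually_const hev μ'
    rw [pd_sum _ (fun α y => U y α * pd α (fun z => φ z a) y) (fun α _ => (hdU α).mul (hdφpd α a))] at h0
    rw [← h0]
    refine Finset.sum_congr rfl (fun α _ => ?_)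
    rw [pd_mul (hdU α) (hdφpd α a), pd_comm (hφa a) μ' α]
  -- (3) derivative of pullback components
  have hpd_pullb : ∀ (α μ' ν' : Fin 4), pd α (fun y => pullb φ y μ' ν') x
      = ∑ a, (pd α (fun y => pd μ' (fun z => φ z a) y) x * pd ν' (fun z => φ z a) x
            + pd μ' (fun z => φ z a) x * pd α (fun y => pd ν' (fun z => φ z a) y) x) := by
    intro α μ' ν'
    have h1 : pd α (fun y => pullb φ y μ' ν') x
        = pd α (fun y => ∑ a, pd μ' (fun z => φ z a) y * pd ν' (fun z => φ z a) y) x := rfl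
    rw [h1, pd_sum _ (fun a y => pd μ' (fun z => φ z a) y * pd ν' (fun z => φ z a) y) (fun a _ => (hdφpd μ' a).mul (hdφpd ν' a))]
    exact Finset.sum_congr rfl (fun a _ => pd_mul (hdφpd μ' a) (hdφpd ν' a) α)
  -- (4) Lie derivative of pullback vanishes
  have hlie_pullb : ∀ μ' ν' : Fin 4, lieD U (pullb φ) x μ' ν' = 0 := by
    intro μ' ν'
    have h1 := hA μ' 0
    have h2 := hA μ' 1
    have h3 := hA μ' 2
    have h4 := hA ν' 0
    have h5 := hA ν' 1
    have h6 := hA ν' 2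
    simp only [Fin.sum_univ_four] at h1 h2 h3 h4 h5 h6
    simp only [lieD]
    simp only [hpd_pullb]
    simp only [pullb]
    simp only [Fin.sum_univ_four, Fin.sum_univ_three]
    linear_combination
      pd ν' (fun z => φ z 0) x * h1 + pd ν' (fun z => φ z 1) x * h2
      + pd ν' (fun z => φ z 2) x * h3 + pd μ' (fun z => φ z 0) x * h4
      + pd μ' (fun z => φ z 1) x * h5 + pd μ' (fun z => φ z 2) x * h6
  -- (5) L equals lam^2 on Ω
  have hLΩ : ∀ y ∈ Ω, Lfun φ y = lam y ^ 2 := by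
    intro y hy
    have h1 := hUnit y hy
    simp only [eta, Fin.sum_univ_four] at h1
    simp [etaCoef] at h1
    show (1/3 : ℝ) * ∑ κ, etaCoef κ * pullb φ y κ κ = lam y ^ 2
    have h2 : ∀ κ, pullb φ y κ κ = lam y ^ 2 * gHU U y κ κ := fun κ => hconf y hy κ κ
    simp only [h2, gHU, Fin.sum_univ_four]
    simp [etaCoef, etaMat]
    linear_combination (lam y ^ 2 / 3) * h1
  -- differentiability of L and gHU components
  have hdL : DifferentiableAt ℝ (Lfun φ) x := by
    have : Lfun φ = fun y => (1/3 : ℝ) * ∑ κ,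
        (etaCoef κ * ∑ a, pd κ (fun z => φ z a) y * pd κ (fun z => φ z a) y) := rfl
    rw [this]
    refine DifferentiableAt.const_mul ?_ _
    refine DifferentiableAt.fun_sum (fun κ _ => ?_)
    refine DifferentiableAt.const_mul ?_ _
    exact DifferentiableAt.fun_sum (fun a _ => (hdφpd κ a).mul (hdφpd κ a))
  have hdgH : ∀ μ' ν' : Fin 4, DifferentiableAt ℝ (fun y => gHU U y μ' ν') x := by
    intro μ' ν'
    have : (fun y => gHU U y μ' ν')
        = fun y => etaMat μ' ν' + (etaCoef μ' * U y μ') * (etaCoef ν' * U y ν') := rfl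
    rw [this]
    exact (differentiableAt_const _).add (((hdU μ').const_mul _).mul ((hdU ν').const_mul _))
  -- (6) derivative of gHU components
  have hpd_gH : ∀ (α μ' ν' : Fin 4), pd α (fun y => gHU U y μ' ν') x
      = (etaCoef μ' * pd α (fun y => U y μ') x) * (etaCoef ν' * U x ν')
        + (etaCoef μ' * U x μ') * (etaCoef ν' * pd α (fun y => U y ν') x) := by
    intro α μ' ν'
    have h1 : pd α (fun y => gHU U y μ' ν') x
        = pd α (fun y => etaMat μ' ν' + (etaCoef μ' * U y μ') * (etaCoef ν' * U y ν')) x := rfl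
    rw [h1, pd_const_add, pd_mul ((hdU μ').const_mul _) ((hdU ν').const_mul _),
      pd_const_mul (hdU μ'), pd_const_mul (hdU ν')]
  -- (7) pullback = L * gHU near x
  have hpb_eq : ∀ μ' ν' : Fin 4,
      (fun y => pullb φ y μ' ν') =ᶠ[nhds x] (fun y => Lfun φ y * gHU U y μ' ν') := by
    intro μ' ν'
    exact Filter.eventuallyEq_of_mem hmem (fun y hy => by
      simp only [hconf y hy μ' ν', hLΩ y hy])
  have hpbx : ∀ α β : Fin 4, pullb φ x α β = Lfun φ x * gHU U x α β := by
    intro α β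
    rw [hLΩ x hx, hconf x hx α β]
  -- (8) Eq1
  have Eq1 : ∀ μ' ν' : Fin 4,
      (∑ α, U x α * pd α (Lfun φ) x) * gHU U x μ' ν'
        + Lfun φ x * lieD U (gHU U) x μ' ν' = 0 := by
    intro μ' ν'
    have h0 := hlie_pullb μ' ν'
    have hole : ∀ α : Fin 4, pd α (fun y => pullb φ y μ' ν') x
        = pd α (Lfun φ) x * gHU U x μ' ν' + Lfun φ x * pd α (fun y => gHU U y μ' ν') x := by
      intro α
      rw [pd_eventually_eq (hpb_eq μ' ν') α, pd_mul hdL (hdgH μ' ν') α]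
    simp only [lieD, hole, hpbx] at h0
    simp only [lieD]
    simp only [Fin.sum_univ_four] at h0 ⊢
    linear_combination h0
  -- (9) trace identities
  have Eq2 : ∑ κ, etaCoef κ * lieD U (gHU U) x κ κ
      = 2 * ∑ α, pd α (fun y => U y α) x := by
    have e0 := hEU 0
    have e1 := hEU 1
    have e2 := hEU 2
    have e3 := hEU 3
    simp only [Fin.sum_univ_four] at e0 e1 e2 e3
    simp [etaCoef] at e0 e1 e2 e3
    simp only [lieD]
    simp only [hpd_gH]
    simp only [gHU]
    simp only [Fin.sum_univ_four]
    simp [etaCoef, etaMat]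
    linear_combination 2 * U x 0 * e0 + 2 * U x 1 * e1 + 2 * U x 2 * e2 + 2 * U x 3 * e3
  have Eq3 : ∑ κ, etaCoef κ * gHU U x κ κ = 3 := by
    have h1 := hUnit x hx
    simp only [eta, Fin.sum_univ_four] at h1
    simp [etaCoef] at h1
    simp only [gHU, Fin.sum_univ_four]
    simp [etaCoef, etaMat]
    linear_combination h1
  -- (10) combine
  set A := ∑ α, U x α * pd α (Lfun φ) x with hAdef
  set D := ∑ α, pd α (fun y => U y α) x with hDdef
  have hUL : A = -(2/3) * Lfun φ x * D := by
    have hs : ∑ κ, etaCoef κ * (A * gHU U x κ κ + Lfun φ x * lieD U (gHU U) x κ κ) = 0 :=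
      Finset.sum_eq_zero (fun κ _ => by rw [Eq1 κ κ, mul_zero])
    have e2 := Eq2
    have e3 := Eq3
    simp only [Fin.sum_univ_four] at hs e2 e3
    simp [etaCoef] at hs e2 e3
    linear_combination (1/3 : ℝ) * hs - (1/3 : ℝ) * A * e3 - (1/3 : ℝ) * Lfun φ x * e2
  have hLne : Lfun φ x ≠ 0 := by
    rw [hLΩ x hx]
    exact pow_ne_zero 2 (ne_of_gt (hlam x hx))
  intro μ ν
  have key : Lfun φ x * lieD U (gHU U) x μ ν
      = Lfun φ x * ((2 / 3) * D * gHU U x μ ν) := by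
    linear_combination Eq1 μ ν - gHU U x μ ν * hUL
  exact mul_left_cancel₀ hLne key
end
end

section
/- Let Ω = { x ∈ ℝ⁴ : x₄ > √(x₁²+x₂²+x₃²) }, τ(x) = √(x₄² − x₁² − x₂² − x₃²), and define ψ : Ω → ℝ⁴ by ψ(x) = ( τ(x)/x₄, x₁/x₄, x₂/x₄, x₃/x₄ ). Then ψ takes values in the unit sphere S³ ⊂ ℝ⁴ (Σ_a ψ^a(x)² = 1), the radial vector field U(x) = x/τ(x) is vertical for ψ (Σ_α U^α ∂_α ψ^a = 0 for all a), and ψ is horizontally conformal with dilation λ² = x₄^{−2}: Σ_{a=1}^{4} ∂_μ ψ^a · ∂_ν ψ^a = x₄^{−2} · ( η_{μν} + ω_μ ω_ν ) on Ω for all μ, ν, where ω_μ = Σ_α η_{μα} x^α / τ. (This is the co-rotational map to S³ with profile β = arcsin(r/x₄) of Example 3.1.) -/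
open scoped BigOperators

noncomputable section

/-- The co-rotational map `ψ(x) = (τ/x₄, x₁/x₄, x₂/x₄, x₃/x₄)` into `S³`. -/
def psiHB (x : Fin 4 → ℝ) : Fin 4 → ℝ :=
  ![tau x / x 3, x 0 / x 3, x 1 / x 3, x 2 / x 3]


lemma proj_hasFDerivAt (i : Fin 4) (x : Fin 4 → ℝ) :
    HasFDerivAt (fun y : Fin 4 → ℝ => y i)
      (ContinuousLinearMap.proj i : (Fin 4 → ℝ) →L[ℝ] ℝ) x :=
  (ContinuousLinearMap.proj i : (Fin 4 → ℝ) →L[ℝ] ℝ).hasFDerivAt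

lemma sq_hasFDerivAt (i : Fin 4) (x : Fin 4 → ℝ) :
    HasFDerivAt (fun y : Fin 4 → ℝ => (y i)^2)
      ((2 * x i) • (ContinuousLinearMap.proj i : (Fin 4 → ℝ) →L[ℝ] ℝ)) x := by
  have h := (proj_hasFDerivAt i x).mul (proj_hasFDerivAt i x)
  have e : (2 * x i) • (ContinuousLinearMap.proj i : (Fin 4 → ℝ) →L[ℝ] ℝ)
      = x i • ContinuousLinearMap.proj i + x i • ContinuousLinearMap.proj i := by
    ext v; simp; ring
  rw [e]
  simpa [sq, Pi.mul_def] using h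

lemma tau_hasFDerivAt (x : Fin 4 → ℝ)
    (hQ : 0 < (x 3)^2 - (x 0)^2 - (x 1)^2 - (x 2)^2) :
    HasFDerivAt tau
      ((1 / (2 * tau x)) • ((2 * x 3) • (ContinuousLinearMap.proj 3 : (Fin 4 → ℝ) →L[ℝ] ℝ)
        - (2 * x 0) • ContinuousLinearMap.proj 0
        - (2 * x 1) • ContinuousLinearMap.proj 1
        - (2 * x 2) • ContinuousLinearMap.proj 2)) x := by
  have hQ' : HasFDerivAt (fun y : Fin 4 → ℝ => (y 3)^2 - (y 0)^2 - (y 1)^2 - (y 2)^2)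
      ((2 * x 3) • (ContinuousLinearMap.proj 3 : (Fin 4 → ℝ) →L[ℝ] ℝ)
        - (2 * x 0) • ContinuousLinearMap.proj 0
        - (2 * x 1) • ContinuousLinearMap.proj 1
        - (2 * x 2) • ContinuousLinearMap.proj 2) x :=
    (((sq_hasFDerivAt 3 x).sub (sq_hasFDerivAt 0 x)).sub (sq_hasFDerivAt 1 x)).sub
      (sq_hasFDerivAt 2 x)
  have hs := (Real.hasDerivAt_sqrt (ne_of_gt hQ)).comp_hasFDerivAt x hQ'
  unfold tau
  simpa [tau, Function.comp_def] using hs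

lemma fin4_mk0 : (⟨0, by norm_num⟩ : Fin 4) = 0 := rfl
lemma fin4_mk1 : (⟨1, by norm_num⟩ : Fin 4) = 1 := rfl
lemma fin4_mk2 : (⟨2, by norm_num⟩ : Fin 4) = 2 := rfl
lemma fin4_mk3 : (⟨3, by norm_num⟩ : Fin 4) = 3 := rfl

lemma pd_tau (x : Fin 4 → ℝ)
    (hQ : 0 < (x 3)^2 - (x 0)^2 - (x 1)^2 - (x 2)^2) (μ : Fin 4) :
    pd μ tau x = -(etaCoef μ * x μ) / tau x := by
  rw [pd, (tau_hasFDerivAt x hQ).fderiv]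
  have hτ : tau x ≠ 0 := by
    simp only [tau]; positivity
  fin_cases μ <;>
    simp only [ContinuousLinearMap.smul_apply, ContinuousLinearMap.sub_apply,
      ContinuousLinearMap.proj_apply, Pi.single_apply, etaCoef] <;>
    simp (config := { decide := true }) only [fin4_mk2, fin4_mk3] <;> norm_num <;> field_simp <;> ring

lemma inv3_hasFDerivAt (x : Fin 4 → ℝ) (h3 : x 3 ≠ 0) :
    HasFDerivAt (fun y : Fin 4 → ℝ => (y 3)⁻¹)
      ((-(x 3 ^ 2)⁻¹) • (ContinuousLinearMap.proj 3 : (Fin 4 → ℝ) →L[ℝ] ℝ)) x :=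
  (hasDerivAt_inv h3).comp_hasFDerivAt x (proj_hasFDerivAt 3 x)

lemma pd_quot (i : Fin 4) (x : Fin 4 → ℝ) (h3 : x 3 ≠ 0) (μ : Fin 4) :
    pd μ (fun y => y i / y 3) x
      = ((if μ = i then (1:ℝ) else 0) * x 3 - x i * (if μ = 3 then 1 else 0)) / (x 3)^2 := by
  have h' : HasFDerivAt (fun y : Fin 4 → ℝ => y i / y 3)
      (x i • ((-(x 3 ^ 2)⁻¹) • (ContinuousLinearMap.proj 3 : (Fin 4 → ℝ) →L[ℝ] ℝ))
        + (x 3)⁻¹ • ContinuousLinearMap.proj i) x := by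
    simpa only [div_eq_mul_inv, Pi.mul_def] using (proj_hasFDerivAt i x).mul (inv3_hasFDerivAt x h3)
  rw [pd, h'.fderiv]
  simp only [ContinuousLinearMap.add_apply, ContinuousLinearMap.smul_apply,
    ContinuousLinearMap.proj_apply, Pi.single_apply, smul_eq_mul]
  fin_cases μ <;> fin_cases i <;>
    simp (config := { decide := true }) only [fin4_mk2, fin4_mk3] <;>
    norm_num <;> field_simp <;> ring

lemma pd_psi0 (x : Fin 4 → ℝ) (h3 : x 3 ≠ 0)
    (hQ : 0 < (x 3)^2 - (x 0)^2 - (x 1)^2 - (x 2)^2) (μ : Fin 4) :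
    pd μ (fun y => tau y / y 3) x
      = (-(etaCoef μ * x μ) / tau x * x 3 - tau x * (if μ = 3 then 1 else 0)) / (x 3)^2 := by
  have h' : HasFDerivAt (fun y : Fin 4 → ℝ => tau y / y 3)
      (tau x • ((-(x 3 ^ 2)⁻¹) • (ContinuousLinearMap.proj 3 : (Fin 4 → ℝ) →L[ℝ] ℝ))
        + (x 3)⁻¹ • ((1 / (2 * tau x)) • ((2 * x 3) • (ContinuousLinearMap.proj 3 : (Fin 4 → ℝ) →L[ℝ] ℝ)
        - (2 * x 0) • ContinuousLinearMap.proj 0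
        - (2 * x 1) • ContinuousLinearMap.proj 1
        - (2 * x 2) • ContinuousLinearMap.proj 2))) x := by
    simpa only [div_eq_mul_inv, Pi.mul_def] using (tau_hasFDerivAt x hQ).mul (inv3_hasFDerivAt x h3)
  rw [pd, h'.fderiv]
  have hτ : tau x ≠ 0 := by simp only [tau]; positivity
  have hp := pd_tau x hQ μ
  rw [pd, (tau_hasFDerivAt x hQ).fderiv] at hp
  simp only [ContinuousLinearMap.add_apply, ContinuousLinearMap.smul_apply,
    ContinuousLinearMap.sub_apply, ContinuousLinearMap.proj_apply, Pi.single_apply,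
    smul_eq_mul] at hp ⊢
  rw [mul_comm ((x 3)⁻¹)]
  rw [hp]
  by_cases h2 : μ = 3 <;> simp [h2, eq_comm] <;> field_simp <;> ring

lemma finNe01 : ((0:Fin 4) = 1) = False := by decide
lemma finNe02 : ((0:Fin 4) = 2) = False := by decide
lemma finNe03 : ((0:Fin 4) = 3) = False := by decide
lemma finNe10 : ((1:Fin 4) = 0) = False := by decide
lemma finNe12 : ((1:Fin 4) = 2) = False := by decide
lemma finNe13 : ((1:Fin 4) = 3) = False := by decide
lemma finNe20 : ((2:Fin 4) = 0) = False := by decide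
lemma finNe21 : ((2:Fin 4) = 1) = False := by decide
lemma finNe23 : ((2:Fin 4) = 3) = False := by decide
lemma finNe30 : ((3:Fin 4) = 0) = False := by decide
lemma finNe31 : ((3:Fin 4) = 1) = False := by decide
lemma finNe32 : ((3:Fin 4) = 2) = False := by decide

lemma psiHB_0 (y : Fin 4 → ℝ) : psiHB y 0 = tau y / y 3 := rfl
lemma psiHB_1 (y : Fin 4 → ℝ) : psiHB y 1 = y 0 / y 3 := rfl
lemma psiHB_2 (y : Fin 4 → ℝ) : psiHB y 2 = y 1 / y 3 := rfl
lemma psiHB_3 (y : Fin 4 → ℝ) : psiHB y 3 = y 2 / y 3 := rfl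

set_option maxHeartbeats 2000000 in
/-- `ψ` takes values in the unit sphere `S³`, the radial field
`U = x/τ` is vertical for `ψ`, and `ψ` is horizontally conformal with square
dilation `λ² = x₄^{−2}`. -/
theorem statement19 :
    ∀ x ∈ lightcone,
      (∑ a, psiHB x a ^ 2 = 1) ∧
      (∀ a : Fin 4, ∑ α, Ubj x α * pd α (fun y => psiHB y a) x = 0) ∧
      (∀ μ ν : Fin 4,
        ∑ a, pd μ (fun y => psiHB y a) x * pd ν (fun y => psiHB y a) x
          = ((x 3) ^ 2)⁻¹ * (etaMat μ ν + omegaBj x μ * omegaBj x ν)) := by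
  intro x hx
  have hxlt : Real.sqrt ((x 0) ^ 2 + (x 1) ^ 2 + (x 2) ^ 2) < x 3 := hx
  have h3 : 0 < x 3 := lt_of_le_of_lt (Real.sqrt_nonneg _) hxlt
  have h3' : x 3 ≠ 0 := ne_of_gt h3
  have hQ : 0 < (x 3)^2 - (x 0)^2 - (x 1)^2 - (x 2)^2 := by
    have h1 := Real.sq_sqrt (by positivity : (0:ℝ) ≤ (x 0)^2 + (x 1)^2 + (x 2)^2)
    nlinarith [Real.sqrt_nonneg ((x 0)^2 + (x 1)^2 + (x 2)^2)]
  have hτpos : 0 < tau x := Real.sqrt_pos.mpr hQ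
  have hτ : tau x ≠ 0 := ne_of_gt hτpos
  have h2 : tau x ^ 2 = (x 3)^2 - (x 0)^2 - (x 1)^2 - (x 2)^2 := Real.sq_sqrt hQ.le
  have h4 : tau x ^ 4 = ((x 3)^2 - (x 0)^2 - (x 1)^2 - (x 2)^2)^2 := by
    rw [← h2]; ring
  have h6 : tau x ^ 6 = ((x 3)^2 - (x 0)^2 - (x 1)^2 - (x 2)^2)^3 := by
    rw [← h2]; ring
  have h8 : tau x ^ 8 = ((x 3)^2 - (x 0)^2 - (x 1)^2 - (x 2)^2)^4 := by
    rw [← h2]; ring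
  have hD0 : ∀ μ, pd μ (fun y => psiHB y 0) x
      = (-(etaCoef μ * x μ) / tau x * x 3 - tau x * (if μ = 3 then 1 else 0)) / (x 3)^2 :=
    fun μ => pd_psi0 x h3' hQ μ
  have hD1 : ∀ μ, pd μ (fun y => psiHB y 1) x
      = ((if μ = 0 then (1:ℝ) else 0) * x 3 - x 0 * (if μ = 3 then 1 else 0)) / (x 3)^2 :=
    fun μ => pd_quot 0 x h3' μ
  have hD2 : ∀ μ, pd μ (fun y => psiHB y 2) x
      = ((if μ = 1 then (1:ℝ) else 0) * x 3 - x 1 * (if μ = 3 then 1 else 0)) / (x 3)^2 :=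
    fun μ => pd_quot 1 x h3' μ
  have hD3 : ∀ μ, pd μ (fun y => psiHB y 3) x
      = ((if μ = 2 then (1:ℝ) else 0) * x 3 - x 2 * (if μ = 3 then 1 else 0)) / (x 3)^2 :=
    fun μ => pd_quot 2 x h3' μ
  refine ⟨?_, ?_, ?_⟩
  · simp only [Fin.sum_univ_four, psiHB_0, psiHB_1, psiHB_2, psiHB_3]
    field_simp
    linear_combination h2
  · intro a
    fin_cases a <;>
      simp only [fin4_mk0, fin4_mk1, fin4_mk2, fin4_mk3, Fin.sum_univ_four, hD0, hD1, hD2, hD3, Ubj, etaCoef] <;>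
      (try simp only [finNe01, finNe02, finNe03, finNe10, finNe12, finNe13, finNe20, finNe21, finNe23, finNe30, finNe31, finNe32, if_true, if_false, eq_self_iff_true]) <;> norm_num <;> field_simp <;> ring_nf <;>
      (try simp only [h8, h6, h4, h2]) <;> (try ring) <;> (try linear_combination (x 3) * h2)
  · intro μ ν
    fin_cases μ <;> fin_cases ν <;>
      simp only [fin4_mk0, fin4_mk1, fin4_mk2, fin4_mk3, Fin.sum_univ_four, hD0, hD1, hD2, hD3,
        omegaBj, etaMat, etaCoef] <;>
      (try simp only [finNe01, finNe02, finNe03, finNe10, finNe12, finNe13, finNe20, finNe21, finNe23, finNe30, finNe31, finNe32, if_true, if_false, eq_self_iff_true]) <;> norm_num1 <;> field_simp <;> ring_nf <;>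
      (try simp only [h8, h6, h4, h2]) <;> (try ring) <;> (try linear_combination (x 3 ^ 2) * h2)
end
end
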